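/- arXiv:1510.05811 — 9 statements merged into one kernel-verified Lean document; each statement's English description precedes it below -/
import Mathlib

section
/- Positive definiteness of the loopy Laplacian: if the graph G is connected and at least one shunt value b̂_i is strictly positive, then for every θ ∈ ℝⁿ the symmetric matrix 𝒜(θ) is positive definite. -/
open Real Finset Matrix

lemma walk_exists_adj_pair {n : ℕ} {G : SimpleGraph (Fin n)} (x : Fin n → ℝ) :
    ∀ {a b : Fin n}, G.Walk a b → x a = 0 → x b ≠ 0 →
      ∃ u v, G.Adj u v ∧ x u = 0 ∧ x v ≠ 0 := by
  intro a b w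
  induction w with
  | nil => intro h1 h2; exact absurd h1 h2
  | cons h p ih =>
      intro ha hb
      rename_i u v w' 
      by_cases hv : x v = 0
      · exact ih hv hb
      · exact ⟨u, v, h, ha, hv⟩

/-- Positive definiteness of the loopy Laplacian: if the graph `G` is
connected and at least one shunt value `b̂ i` is strictly positive, then for every
`θ ∈ ℝⁿ` the symmetric matrix `𝒜(θ)` is positive definite. -/
theorem loopy_laplacian_posDef
    (n : ℕ) (G : SimpleGraph (Fin n)) [DecidableRel G.Adj]
    (hconn : G.Connected)
    (B : Fin n → Fin n → ℝ)
    (hBsymm : ∀ i j, B i j = B j i)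
    (hBpos : ∀ i j, G.Adj i j → 0 < B i j)
    (hBzero : ∀ i j, ¬ G.Adj i j → B i j = 0)
    (bhat : Fin n → ℝ)
    (hbhat : ∀ i, 0 ≤ bhat i)
    (hone : ∃ i, 0 < bhat i)
    (θ : Fin n → ℝ) :
    (Matrix.of fun i j =>
      if i = j then bhat i + ∑ l ∈ Finset.univ.erase i, B i l
      else -(B i j * Real.cos (θ i - θ j))).PosDef := by
  classical
  have hBdiag : ∀ i, B i i = 0 := fun i => hBzero i i (G.irrefl)
  set c : Fin n → Fin n → ℝ := fun i j => Real.cos (θ i - θ j) with hc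
  have hcsymm : ∀ i j, c i j = c j i := by
    intro i j; simp only [hc]; rw [← Real.cos_neg, neg_sub]
  have hcle : ∀ i j, |c i j| ≤ 1 := fun i j => Real.abs_cos_le_one _
  set M : Matrix (Fin n) (Fin n) ℝ := Matrix.of fun i j =>
      if i = j then bhat i + ∑ l ∈ Finset.univ.erase i, B i l
      else -(B i j * Real.cos (θ i - θ j)) with hM
  have hMentry : ∀ i j, M i j = (if i = j then bhat i + ∑ l, B i l else 0) - B i j * c i j := by
    intro i j
    by_cases h : i = j
    · subst h
      have : ∑ l ∈ Finset.univ.erase i, B i l = ∑ l, B i l :=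
        Finset.sum_erase _ (hBdiag i)
      simp [hM, this, hBdiag i]
    · simp [hM, h, hc]
  -- key quadratic form identity
  have key : ∀ x : Fin n → ℝ, dotProduct x (M *ᵥ x)
      = (∑ i, bhat i * x i ^ 2)
        + (1/2) * ∑ i, ∑ j, B i j * (x i ^ 2 + x j ^ 2 - 2 * c i j * x i * x j) := by
    intro x
    have h1 : dotProduct x (M *ᵥ x) = ∑ i, ∑ j, x i * (M i j * x j) := by
      simp [dotProduct, Matrix.mulVec, Finset.mul_sum]
    have h2 : ∀ i, ∑ j, x i * (M i j * x j)
        = bhat i * x i ^ 2 + (∑ l, B i l) * x i ^ 2 - ∑ j, B i j * c i j * (x i * x j) := by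
      intro i
      have e1 : ∀ j, x i * (M i j * x j)
          = x i * ((if i = j then bhat i + ∑ l, B i l else 0) * x j)
            - B i j * c i j * (x i * x j) := by
        intro j; rw [hMentry i j]; ring
      rw [Finset.sum_congr rfl (fun j _ => e1 j), Finset.sum_sub_distrib]
      have e2 : (∑ j, x i * ((if i = j then bhat i + ∑ l, B i l else 0) * x j))
          = bhat i * x i ^ 2 + (∑ l, B i l) * x i ^ 2 := by
        rw [Finset.sum_eq_single i]
        · simp; ring
        · intro b _ hb; simp [Ne.symm hb]
        · intro h; exact absurd (Finset.mem_univ i) h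
      rw [e2]
    rw [h1, Finset.sum_congr rfl (fun i _ => h2 i)]
    have hswap : (∑ i, ∑ j, B i j * x j ^ 2) = ∑ i, ∑ j, B i j * x i ^ 2 := by
      rw [Finset.sum_comm]
      exact Finset.sum_congr rfl fun i _ => Finset.sum_congr rfl fun j _ => by
        rw [hBsymm]
    have expand : (∑ i, ∑ j, B i j * (x i ^ 2 + x j ^ 2 - 2 * c i j * x i * x j))
        = (∑ i, ∑ j, B i j * x i ^ 2) + (∑ i, ∑ j, B i j * x j ^ 2)
          - 2 * ∑ i, ∑ j, B i j * c i j * (x i * x j) := by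
      rw [Finset.mul_sum, ← Finset.sum_add_distrib, ← Finset.sum_sub_distrib]
      refine Finset.sum_congr rfl fun i _ => ?_
      rw [Finset.mul_sum, ← Finset.sum_add_distrib, ← Finset.sum_sub_distrib]
      exact Finset.sum_congr rfl fun j _ => by ring
    have hsum : (∑ i, (∑ l, B i l) * x i ^ 2) = ∑ i, ∑ j, B i j * x i ^ 2 := by
      refine Finset.sum_congr rfl fun i _ => ?_
      rw [Finset.sum_mul]
    rw [Finset.sum_sub_distrib, Finset.sum_add_distrib, hsum, expand, hswap]
    ring
  -- nonnegativity of pair terms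
  have hpair : ∀ (x : Fin n → ℝ) i j,
      0 ≤ B i j * (x i ^ 2 + x j ^ 2 - 2 * c i j * x i * x j) := by
    intro x i j
    by_cases h : G.Adj i j
    · have hB := hBpos i j h
      have h1 : -1 ≤ c i j := neg_le_of_abs_le (hcle i j)
      have h2 : c i j ≤ 1 := le_of_abs_le (hcle i j)
      have : 0 ≤ x i ^ 2 + x j ^ 2 - 2 * c i j * x i * x j := by
        nlinarith [sq_nonneg (x i - x j), sq_nonneg (x i + x j)]
      positivity
    · rw [hBzero i j h]; ring_nf; simp
  rw [Matrix.posDef_iff_dotProduct_mulVec]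
  constructor
  · -- Hermitian
    rw [Matrix.IsHermitian, Matrix.ext_iff.symm]
    intro i j
    simp only [Matrix.conjTranspose_apply, star, hM, Matrix.of_apply]
    by_cases h : i = j
    · simp [h]
    · simp only [h, Ne.symm h, if_neg, ite_false]
      rw [hBsymm j i, ← Real.cos_neg, neg_sub]
  · intro x hx
    rw [star_trivial, key x]
    obtain ⟨k, hk⟩ := hone
    have hinner : ∀ i, 0 ≤ ∑ j, B i j * (x i ^ 2 + x j ^ 2 - 2 * c i j * x i * x j) :=
      fun i => Finset.sum_nonneg fun j _ => hpair x i j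
    have hA : 0 ≤ ∑ i, bhat i * x i ^ 2 :=
      Finset.sum_nonneg fun i _ => mul_nonneg (hbhat i) (sq_nonneg _)
    have hS : 0 ≤ ∑ i, ∑ j, B i j * (x i ^ 2 + x j ^ 2 - 2 * c i j * x i * x j) :=
      Finset.sum_nonneg fun i _ => hinner i
    by_cases hxk : x k = 0
    · -- find adjacent pair with x u = 0, x v ≠ 0
      obtain ⟨i0, hi0⟩ := Function.ne_iff.mp hx
      obtain ⟨w⟩ := hconn.preconnected k i0
      obtain ⟨u, v, huv, hu, hv⟩ := walk_exists_adj_pair x w hxk hi0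
      have hterm : 0 < B u v * (x u ^ 2 + x v ^ 2 - 2 * c u v * x u * x v) := by
        rw [hu]
        have := hBpos u v huv
        have hv2 : 0 < x v ^ 2 := by positivity
        nlinarith
      have h1 : B u v * (x u ^ 2 + x v ^ 2 - 2 * c u v * x u * x v)
          ≤ ∑ j, B u j * (x u ^ 2 + x j ^ 2 - 2 * c u j * x u * x j) :=
        Finset.single_le_sum (fun j _ => hpair x u j) (Finset.mem_univ v)
      have h2 : (∑ j, B u j * (x u ^ 2 + x j ^ 2 - 2 * c u j * x u * x j))
          ≤ ∑ i, ∑ j, B i j * (x i ^ 2 + x j ^ 2 - 2 * c i j * x i * x j) :=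
        Finset.single_le_sum (fun i _ => hinner i) (Finset.mem_univ u)
      nlinarith
    · have hterm : 0 < bhat k * x k ^ 2 := by positivity
      have h1 : bhat k * x k ^ 2 ≤ ∑ i, bhat i * x i ^ 2 :=
        Finset.single_le_sum (fun i _ => mul_nonneg (hbhat i) (sq_nonneg _))
          (Finset.mem_univ k)
      nlinarith
end

section
/- Incremental cyclo-dissipativity of the conventional droop controller (Theorem 1, item 1): let (θ̄, ω̄, V̄) satisfy V̄ ∈ ℝⁿ_{>0} and ω̄ = ω⁰·1 for some ω⁰ ∈ ℝ, put P̄ := P(θ̄,V̄), Q̄ := Q(θ̄,V̄), let ū_P ∈ ℝⁿ satisfy 0 = −(ω̄ − ω*) − K_P(P̄ − P*) + ū_P, and set ū_Q := V̄ + K_Q Q̄. Then for every θ ∈ ℝⁿ, ω ∈ ℝⁿ, V ∈ ℝⁿ_{>0} and u_P, u_Q ∈ ℝⁿ, defining g ∈ ℝⁿ by g_i = (V_i + (k_Q)_i Q_i(θ,V) − (ū_Q)_i) / ((k_Q)_i V_i), the following identity holds: (P(θ,V) − P̄)ᵀ ω + (ω − ω̄)ᵀ K_P⁻¹ (−(ω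 − ω*) − K_P(P(θ,V) − P*) + u_P) + gᵀ T_Q⁻¹ (−V − K_Q Q(θ,V) + u_Q) = −(ω − ω̄)ᵀ K_P⁻¹ (ω − ω̄) + (ω − ω̄)ᵀ K_P⁻¹ (u_P − ū_P) − gᵀ T_Q⁻¹ K_Q [V] g + gᵀ T_Q⁻¹ (u_Q − ū_Q). -/
open Real Finset Matrix

/-- `B_ii = b̂_i + ∑_{j ≠ i} B_ij`. -/
noncomputable def Bdiag (n : ℕ) (B : Fin n → Fin n → ℝ) (bhat : Fin n → ℝ) (i : Fin n) : ℝ :=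
  bhat i + ∑ j ∈ Finset.univ.erase i, B i j

/-- Active power `P_i(θ,V) = ∑_{j ≠ i} B_ij V_i V_j sin(θ_i − θ_j)`. -/
noncomputable def activeP (n : ℕ) (B : Fin n → Fin n → ℝ) (θ V : Fin n → ℝ) (i : Fin n) : ℝ :=
  ∑ j ∈ Finset.univ.erase i, B i j * V i * V j * Real.sin (θ i - θ j)

/-- Reactive power `Q_i(θ,V) = B_ii V_i² − ∑_{j ≠ i} B_ij V_i V_j cos(θ_i − θ_j)`. -/
noncomputable def reactiveQ (n : ℕ) (B : Fin n → Fin n → ℝ) (bhat : Fin n → ℝ)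
    (θ V : Fin n → ℝ) (i : Fin n) : ℝ :=
  Bdiag n B bhat i * V i ^ 2
    - ∑ j ∈ Finset.univ.erase i, B i j * V i * V j * Real.cos (θ i - θ j)

lemma sum_antisym {n : ℕ} (f : Fin n → Fin n → ℝ) (h : ∀ i j, f i j = - f j i) :
    ∑ i, ∑ j ∈ Finset.univ.erase i, f i j = 0 := by
  have hdiag : ∀ i, f i i = 0 := fun i => by have := h i i; linarith
  have hfull : ∀ i : Fin n, ∑ j ∈ Finset.univ.erase i, f i j = ∑ j, f i j := by
    intro i; exact Finset.sum_erase _ (hdiag i)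
  have h1 : ∑ i, ∑ j, f j i = ∑ i, ∑ j, f i j := Finset.sum_comm
  have h2 : ∑ i, ∑ j, f j i = -∑ i, ∑ j, f i j := by
    rw [← Finset.sum_neg_distrib]
    refine Finset.sum_congr rfl fun i _ => ?_
    rw [← Finset.sum_neg_distrib]
    exact Finset.sum_congr rfl fun j _ => h j i
  simp_rw [hfull]; linarith

lemma activeP_sum_zero {n : ℕ} (B : Fin n → Fin n → ℝ) (hBsymm : ∀ i j, B i j = B j i)
    (θ V : Fin n → ℝ) : ∑ i, activeP n B θ V i = 0 := by
  unfold activeP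
  apply sum_antisym
  intro i j
  rw [hBsymm i j, show θ j - θ i = -(θ i - θ j) from by ring, Real.sin_neg]; ring

/-- Incremental cyclo-dissipativity of the conventional droop controller
(Theorem 1, item 1). -/
theorem droop_incremental_cyclo_dissipativity
    (n : ℕ) (G : SimpleGraph (Fin n)) [DecidableRel G.Adj]
    (hconn : G.Connected)
    (B : Fin n → Fin n → ℝ)
    (hBsymm : ∀ i j, B i j = B j i)
    (hBpos : ∀ i j, G.Adj i j → 0 < B i j)
    (hBzero : ∀ i j, ¬ G.Adj i j → B i j = 0)
    (bhat : Fin n → ℝ) (hbhat : ∀ i, 0 ≤ bhat i)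
    (kP TP TQ kQ : Fin n → ℝ)
    (hkP : ∀ i, 0 < kP i) (hTP : ∀ i, 0 < TP i)
    (hTQ : ∀ i, 0 < TQ i) (hkQ : ∀ i, 0 < kQ i)
    (ωstar Pstar : Fin n → ℝ)
    (θbar ωbar Vbar : Fin n → ℝ) (ω0 : ℝ)
    (hVbar : ∀ i, 0 < Vbar i)
    (hωbar : ωbar = fun _ => ω0)
    (uPbar uQbar : Fin n → ℝ)
    (huPbar : ∀ i, 0 = -(ωbar i - ωstar i)
        - kP i * (activeP n B θbar Vbar i - Pstar i) + uPbar i)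
    (huQbar : uQbar = fun i => Vbar i + kQ i * reactiveQ n B bhat θbar Vbar i)
    (θ ω V uP uQ : Fin n → ℝ) (hV : ∀ i, 0 < V i)
    (g : Fin n → ℝ)
    (hg : ∀ i, g i = (V i + kQ i * reactiveQ n B bhat θ V i - uQbar i) / (kQ i * V i)) :
    ∑ i, (activeP n B θ V i - activeP n B θbar Vbar i) * ω i
      + ∑ i, (ω i - ωbar i) * (kP i)⁻¹
          * (-(ω i - ωstar i) - kP i * (activeP n B θ V i - Pstar i) + uP i)
      + ∑ i, g i * (TQ i)⁻¹ * (-(V i) - kQ i * reactiveQ n B bhat θ V i + uQ i)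
    =
    -∑ i, (ω i - ωbar i) * (kP i)⁻¹ * (ω i - ωbar i)
      + ∑ i, (ω i - ωbar i) * (kP i)⁻¹ * (uP i - uPbar i)
      - ∑ i, g i * (TQ i)⁻¹ * (kQ i * V i) * g i
      + ∑ i, g i * (TQ i)⁻¹ * (uQ i - uQbar i) := by
  set P := activeP n B θ V with hP
  set Pb := activeP n B θbar Vbar with hPb
  set Q := reactiveQ n B bhat θ V with hQ
  have hPsum : ∑ i, P i = 0 := activeP_sum_zero B hBsymm θ V
  have hPbsum : ∑ i, Pb i = 0 := activeP_sum_zero B hBsymm θbar Vbar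
  have key : ∀ i, (P i - Pb i) * ω i
      + (ω i - ωbar i) * (kP i)⁻¹ * (-(ω i - ωstar i) - kP i * (P i - Pstar i) + uP i)
      + g i * (TQ i)⁻¹ * (-(V i) - kQ i * Q i + uQ i)
      = ω0 * (P i - Pb i)
      + (-((ω i - ωbar i) * (kP i)⁻¹ * (ω i - ωbar i))
        + (ω i - ωbar i) * (kP i)⁻¹ * (uP i - uPbar i)
        - g i * (TQ i)⁻¹ * (kQ i * V i) * g i
        + g i * (TQ i)⁻¹ * (uQ i - uQbar i)) := by
    intro i
    have hkPne : kP i ≠ 0 := (hkP i).ne'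
    have hkQne : kQ i ≠ 0 := (hkQ i).ne'
    have hVne : V i ≠ 0 := (hV i).ne'
    have hTQne : (TQ i) ≠ 0 := (hTQ i).ne'
    have huP : uPbar i = (ωbar i - ωstar i) + kP i * (Pb i - Pstar i) := by
      have := huPbar i; linarith
    have hgi : kQ i * V i * g i = V i + kQ i * Q i - uQbar i := by
      rw [hg i]; field_simp
    have hωb : ωbar i = ω0 := by rw [hωbar]
    rw [huP, hωb]
    have e1 : -(V i) - kQ i * Q i + uQ i = -(kQ i * V i * g i) + (uQ i - uQbar i) := by
      rw [hgi]; ring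
    rw [e1]
    field_simp
    ring
  calc ∑ i, (P i - Pb i) * ω i
      + ∑ i, (ω i - ωbar i) * (kP i)⁻¹
          * (-(ω i - ωstar i) - kP i * (P i - Pstar i) + uP i)
      + ∑ i, g i * (TQ i)⁻¹ * (-(V i) - kQ i * Q i + uQ i)
      = ∑ i, ((P i - Pb i) * ω i
        + (ω i - ωbar i) * (kP i)⁻¹ * (-(ω i - ωstar i) - kP i * (P i - Pstar i) + uP i)
        + g i * (TQ i)⁻¹ * (-(V i) - kQ i * Q i + uQ i)) := by
        rw [Finset.sum_add_distrib, Finset.sum_add_distrib]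
    _ = ∑ i, (ω0 * (P i - Pb i)
        + (-((ω i - ωbar i) * (kP i)⁻¹ * (ω i - ωbar i))
          + (ω i - ωbar i) * (kP i)⁻¹ * (uP i - uPbar i)
          - g i * (TQ i)⁻¹ * (kQ i * V i) * g i
          + g i * (TQ i)⁻¹ * (uQ i - uQbar i))) := Finset.sum_congr rfl fun i _ => key i
    _ = ω0 * (∑ i, P i - ∑ i, Pb i)
        + (-∑ i, (ω i - ωbar i) * (kP i)⁻¹ * (ω i - ωbar i)
          + ∑ i, (ω i - ωbar i) * (kP i)⁻¹ * (uP i - uPbar i)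
          - ∑ i, g i * (TQ i)⁻¹ * (kQ i * V i) * g i
          + ∑ i, g i * (TQ i)⁻¹ * (uQ i - uQbar i)) := by
        rw [Finset.sum_add_distrib]
        congr 1
        · rw [← Finset.mul_sum, Finset.sum_sub_distrib]
        · rw [Finset.sum_add_distrib, Finset.sum_sub_distrib, Finset.sum_add_distrib,
            Finset.sum_neg_distrib]
    _ = -∑ i, (ω i - ωbar i) * (kP i)⁻¹ * (ω i - ωbar i)
      + ∑ i, (ω i - ωbar i) * (kP i)⁻¹ * (uP i - uPbar i)
      - ∑ i, g i * (TQ i)⁻¹ * (kQ i * V i) * g i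
      + ∑ i, g i * (TQ i)⁻¹ * (uQ i - uQbar i) := by
        rw [hPsum, hPbsum]; ring
end

section
/- Incremental cyclo-dissipativity of the quadratic droop controller (Theorem 1, item 2): let (θ̄, ω̄, V̄) satisfy V̄ ∈ ℝⁿ_{>0} and ω̄ = ω⁰·1 for some ω⁰ ∈ ℝ, put P̄ := P(θ̄,V̄), Q̄ := Q(θ̄,V̄), let ū_P ∈ ℝⁿ satisfy 0 = −(ω̄ − ω*) − K_P(P̄ − P*) + ū_P, and let ū_Q ∈ ℝⁿ satisfy 0 = −K_Q Q̄ − [V̄](V̄ − ū_Q). Then for every θ ∈ ℝⁿ, ω ∈ ℝⁿ, V ∈ ℝⁿ_{>0} and u_P, u_Q ∈ ℝⁿ, defining g := [V]⁻¹ Q(θ,V) − [V̄]⁻¹ Q̄ + K_Q⁻¹ (V − V̄), the following identity holds: (P(θ,V) − P̄)ᵀ ω + (ω − ω̄)ᵀ K_P⁻¹ (−(ω − ω*) − K_P(P(θ,V) − P*) + u_P) + gᵀ T_Q⁻¹ (−K_Q Q(θ,V) − [V](V − u_Q)) = −(ω − ω̄)ᵀ K_P⁻¹ (ω − ω̄)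 + (ω − ω̄)ᵀ K_P⁻¹ (u_P − ū_P) − gᵀ T_Q⁻¹ K_Q [V] g + gᵀ T_Q⁻¹ [V] (u_Q − ū_Q). -/
open Real Finset Matrix

/-- The total active power vanishes, by antisymmetry. -/
lemma sum_activeP_zero (n : ℕ) (B : Fin n → Fin n → ℝ) (hBsymm : ∀ i j, B i j = B j i)
    (θ V : Fin n → ℝ) : ∑ i, activeP n B θ V i = 0 := by
  have h1 : ∑ i, activeP n B θ V i
      = ∑ i : Fin n, ∑ j : Fin n, B i j * V i * V j * Real.sin (θ i - θ j) := by
    refine Finset.sum_congr rfl fun i _ => ?_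
    rw [activeP, Finset.sum_erase _ (by simp)]
  have h2 : ∑ i : Fin n, ∑ j : Fin n, B i j * V i * V j * Real.sin (θ i - θ j)
      = -∑ i : Fin n, ∑ j : Fin n, B i j * V i * V j * Real.sin (θ i - θ j) := by
    nth_rewrite 1 [Finset.sum_comm]
    rw [← Finset.sum_neg_distrib]
    refine Finset.sum_congr rfl fun i _ => ?_
    rw [← Finset.sum_neg_distrib]
    refine Finset.sum_congr rfl fun j _ => ?_
    rw [hBsymm j i, show θ j - θ i = -(θ i - θ j) by ring, Real.sin_neg]
    ring
  rw [h1]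
  linarith [h2]

/-- The pointwise dissipation identity, up to the term `ω0 * (a - abar)`. -/
lemma droop_ptwise (a abar q ω ω0 ωst Pst kP TQ kQ V uP uPb uQ uQb g : ℝ)
    (hkP : kP ≠ 0) (hkQ : kQ ≠ 0)
    (huPb : uPb = (ω0 - ωst) + kP * (abar - Pst))
    (hq : q = V * g - V * (V - uQb) / kQ) :
    (a - abar) * ω + (ω - ω0) * kP⁻¹ * (-(ω - ωst) - kP * (a - Pst) + uP)
      + g * TQ⁻¹ * (-(kQ * q) - V * (V - uQ))
    = -((ω - ω0) * kP⁻¹ * (ω - ω0)) + (ω - ω0) * kP⁻¹ * (uP - uPb)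
      - g * TQ⁻¹ * (kQ * V) * g + g * TQ⁻¹ * V * (uQ - uQb) + ω0 * (a - abar) := by
  subst huPb hq
  field_simp
  ring

/-- Incremental cyclo-dissipativity of the quadratic droop controller
(Theorem 1, item 2). -/
theorem quadratic_droop_incremental_cyclo_dissipativity
    (n : ℕ) (G : SimpleGraph (Fin n)) [DecidableRel G.Adj]
    (hconn : G.Connected)
    (B : Fin n → Fin n → ℝ)
    (hBsymm : ∀ i j, B i j = B j i)
    (hBpos : ∀ i j, G.Adj i j → 0 < B i j)
    (hBzero : ∀ i j, ¬ G.Adj i j → B i j = 0)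
    (bhat : Fin n → ℝ) (hbhat : ∀ i, 0 ≤ bhat i)
    (kP TP TQ kQ : Fin n → ℝ)
    (hkP : ∀ i, 0 < kP i) (hTP : ∀ i, 0 < TP i)
    (hTQ : ∀ i, 0 < TQ i) (hkQ : ∀ i, 0 < kQ i)
    (ωstar Pstar : Fin n → ℝ)
    (θbar ωbar Vbar : Fin n → ℝ) (ω0 : ℝ)
    (hVbar : ∀ i, 0 < Vbar i)
    (hωbar : ωbar = fun _ => ω0)
    (uPbar uQbar : Fin n → ℝ)
    (huPbar : ∀ i, 0 = -(ωbar i - ωstar i)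
        - kP i * (activeP n B θbar Vbar i - Pstar i) + uPbar i)
    (huQbar : ∀ i, 0 = -(kQ i * reactiveQ n B bhat θbar Vbar i)
        - Vbar i * (Vbar i - uQbar i))
    (θ ω V uP uQ : Fin n → ℝ) (hV : ∀ i, 0 < V i)
    (g : Fin n → ℝ)
    (hg : ∀ i, g i = reactiveQ n B bhat θ V i / V i
        - reactiveQ n B bhat θbar Vbar i / Vbar i + (kQ i)⁻¹ * (V i - Vbar i)) :
    ∑ i, (activeP n B θ V i - activeP n B θbar Vbar i) * ω i
      + ∑ i, (ω i - ωbar i) * (kP i)⁻¹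
          * (-(ω i - ωstar i) - kP i * (activeP n B θ V i - Pstar i) + uP i)
      + ∑ i, g i * (TQ i)⁻¹
          * (-(kQ i * reactiveQ n B bhat θ V i) - V i * (V i - uQ i))
    =
    -∑ i, (ω i - ωbar i) * (kP i)⁻¹ * (ω i - ωbar i)
      + ∑ i, (ω i - ωbar i) * (kP i)⁻¹ * (uP i - uPbar i)
      - ∑ i, g i * (TQ i)⁻¹ * (kQ i * V i) * g i
      + ∑ i, g i * (TQ i)⁻¹ * V i * (uQ i - uQbar i) := by
  subst hωbar
  have hq : ∀ i, reactiveQ n B bhat θ V i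
      = V i * g i - V i * (V i - uQbar i) / kQ i := by
    intro i
    have hVne : V i ≠ 0 := (hV i).ne'
    have hVbne : Vbar i ≠ 0 := (hVbar i).ne'
    have hkQne : kQ i ≠ 0 := (hkQ i).ne'
    rw [hg i]
    have h2 := huQbar i
    field_simp
    linear_combination (V i) * h2
  have huPb : ∀ i, uPbar i = (ω0 - ωstar i) + kP i * (activeP n B θbar Vbar i - Pstar i) := by
    intro i
    have := huPbar i
    simp only at this
    linarith
  have key : ∀ i : Fin n,
      (activeP n B θ V i - activeP n B θbar Vbar i) * ω i
        + (ω i - ω0) * (kP i)⁻¹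
            * (-(ω i - ωstar i) - kP i * (activeP n B θ V i - Pstar i) + uP i)
        + g i * (TQ i)⁻¹
            * (-(kQ i * reactiveQ n B bhat θ V i) - V i * (V i - uQ i))
      = (-((ω i - ω0) * (kP i)⁻¹ * (ω i - ω0))
          + (ω i - ω0) * (kP i)⁻¹ * (uP i - uPbar i)
          - g i * (TQ i)⁻¹ * (kQ i * V i) * g i
          + g i * (TQ i)⁻¹ * V i * (uQ i - uQbar i))
        + ω0 * (activeP n B θ V i - activeP n B θbar Vbar i) := by
    intro i
    have := droop_ptwise (activeP n B θ V i) (activeP n B θbar Vbar i)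
      (reactiveQ n B bhat θ V i) (ω i) ω0 (ωstar i) (Pstar i) (kP i) (TQ i) (kQ i)
      (V i) (uP i) (uPbar i) (uQ i) (uQbar i) (g i)
      (ne_of_gt (hkP i)) (ne_of_gt (hkQ i)) (huPb i) (hq i)
    linarith [this]
  have hS1 := sum_activeP_zero n B hBsymm θ V
  have hS2 := sum_activeP_zero n B hBsymm θbar Vbar
  calc
    ∑ i, (activeP n B θ V i - activeP n B θbar Vbar i) * ω i
      + ∑ i, (ω i - (fun _ => ω0) i) * (kP i)⁻¹
          * (-(ω i - ωstar i) - kP i * (activeP n B θ V i - Pstar i) + uP i)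
      + ∑ i, g i * (TQ i)⁻¹
          * (-(kQ i * reactiveQ n B bhat θ V i) - V i * (V i - uQ i))
      = ∑ i, ((activeP n B θ V i - activeP n B θbar Vbar i) * ω i
        + (ω i - ω0) * (kP i)⁻¹
            * (-(ω i - ωstar i) - kP i * (activeP n B θ V i - Pstar i) + uP i)
        + g i * (TQ i)⁻¹
            * (-(kQ i * reactiveQ n B bhat θ V i) - V i * (V i - uQ i))) := by
        rw [Finset.sum_add_distrib, Finset.sum_add_distrib]
    _ = ∑ i, ((-((ω i - ω0) * (kP i)⁻¹ * (ω i - ω0))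
          + (ω i - ω0) * (kP i)⁻¹ * (uP i - uPbar i)
          - g i * (TQ i)⁻¹ * (kQ i * V i) * g i
          + g i * (TQ i)⁻¹ * V i * (uQ i - uQbar i))
        + ω0 * (activeP n B θ V i - activeP n B θbar Vbar i)) :=
        Finset.sum_congr rfl fun i _ => key i
    _ = ∑ i, (-((ω i - ω0) * (kP i)⁻¹ * (ω i - ω0))
          + (ω i - ω0) * (kP i)⁻¹ * (uP i - uPbar i)
          - g i * (TQ i)⁻¹ * (kQ i * V i) * g i
          + g i * (TQ i)⁻¹ * V i * (uQ i - uQbar i))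
        + ω0 * (∑ i, activeP n B θ V i - ∑ i, activeP n B θbar Vbar i) := by
        rw [Finset.sum_add_distrib, ← Finset.mul_sum, Finset.sum_sub_distrib]
    _ = -∑ i, (ω i - (fun _ => ω0) i) * (kP i)⁻¹ * (ω i - (fun _ => ω0) i)
      + ∑ i, (ω i - (fun _ => ω0) i) * (kP i)⁻¹ * (uP i - uPbar i)
      - ∑ i, g i * (TQ i)⁻¹ * (kQ i * V i) * g i
      + ∑ i, g i * (TQ i)⁻¹ * V i * (uQ i - uQbar i) := by
        rw [hS1, hS2, sub_self, mul_zero, add_zero]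
        rw [Finset.sum_add_distrib, Finset.sum_sub_distrib, Finset.sum_add_distrib,
          Finset.sum_neg_distrib]
end

section
/- Strict convexity of the Bregman storage function (Proposition 1): let V̄ ∈ ℝⁿ_{>0}, φ̄ ∈ ℝ^{n−1}, h ∈ ℝⁿ, and set η̄ := D₁ᵀ φ̄, assuming η̄_k ∈ (−π/2, π/2) for every edge k. For each node i put m_ii := b̂_i + Σ_{ℓ : {i,ℓ}∈E} B_iℓ (1 − (V̄_ℓ/V̄_i)·sin²(η̄_{k(i,ℓ)})/cos(η̄_{k(i,ℓ)})) + h_i, where k(i,ℓ) denotes the edge index of {i,ℓ}. If m_ii > Σ_{ℓ : {i,ℓ}∈E} B_iℓ / cos(η̄_{k(i,ℓ)}) for all i = 1,…,n, then the symmetric ((n−1)+n+n)-dimensional block matrix H := [[D₁ Γ(V̄) [cos η̄] D₁ᵀ, 0, D₁ [sin η̄] Γ(V̄) |D|ᵀ [V̄]⁻¹], [0, K_P⁻¹ T_P, 0], [[V̄]⁻¹ |D| Γ(V̄) [sin η̄] D₁ᵀ, 0, 𝒜(cos η̄) + diag(h)]] is positive definite, where 𝒜(cos η̄) is the symmetric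 n×n matrix with diagonal entries B_ii and off-diagonal entries −B_ij cos(η̄_{k(i,j)}) for {i,j} ∈ E (and 0 otherwise). -/
open Real Finset Matrix

namespace MicrogridHessian

variable {n m : ℕ}

/-- Incidence matrix `D` of the oriented graph: column `k` has `+1` in row `e1 k`
and `−1` in row `e2 k`. -/
def Dmat (e1 e2 : Fin m → Fin (n + 1)) : Matrix (Fin (n + 1)) (Fin m) ℝ :=
  Matrix.of fun i k => if e1 k = i then 1 else if e2 k = i then -1 else 0

/-- Entrywise absolute value `|D|` of the incidence matrix. -/
def absD (e1 e2 : Fin m → Fin (n + 1)) : Matrix (Fin (n + 1)) (Fin m) ℝ :=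
  Matrix.of fun i k => if e1 k = i ∨ e2 k = i then 1 else 0

/-- `D₁`: the incidence matrix with its last row deleted. -/
def D1 (e1 e2 : Fin m → Fin (n + 1)) : Matrix (Fin n) (Fin m) ℝ :=
  Matrix.of fun i k => Dmat e1 e2 i.castSucc k

/-- `η̄ := D₁ᵀ φ̄`. -/
noncomputable def etabar (e1 e2 : Fin m → Fin (n + 1)) (φbar : Fin n → ℝ) : Fin m → ℝ :=
  (D1 e1 e2)ᵀ *ᵥ φbar

/-- `Γ(V)`: diagonal with entries `B_ij V_i V_j` for edge `k ∼ {i,j}`. -/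
def Γmat (e1 e2 : Fin m → Fin (n + 1)) (w : Fin m → ℝ) (V : Fin (n + 1) → ℝ) :
    Matrix (Fin m) (Fin m) ℝ :=
  Matrix.diagonal fun k => w k * V (e1 k) * V (e2 k)

/-- `B_ii = b̂_i + ∑_{edges k incident to i} w k`. -/
def Bii (e1 e2 : Fin m → Fin (n + 1)) (w : Fin m → ℝ) (bhat : Fin (n + 1) → ℝ)
    (i : Fin (n + 1)) : ℝ :=
  bhat i + ∑ k, if e1 k = i ∨ e2 k = i then w k else 0

/-- `𝒜(cos η̄)`: diagonal entries `B_ii`, off-diagonal entries `−B_ij cos η̄_{k(i,j)}`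
for `{i,j} ∈ E` and `0` otherwise. -/
noncomputable def Amat (e1 e2 : Fin m → Fin (n + 1)) (w : Fin m → ℝ) (bhat : Fin (n + 1) → ℝ)
    (η : Fin m → ℝ) : Matrix (Fin (n + 1)) (Fin (n + 1)) ℝ :=
  Matrix.of fun i j =>
    if i = j then Bii e1 e2 w bhat i
    else -∑ k, (if (e1 k = i ∧ e2 k = j) ∨ (e1 k = j ∧ e2 k = i)
      then w k * Real.cos (η k) else 0)

/-- The other endpoint of the edge `k` incident to node `i`. -/
def other (e1 e2 : Fin m → Fin (n + 1)) (k : Fin m) (i : Fin (n + 1)) : Fin (n + 1) :=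
  if e1 k = i then e2 k else e1 k

/-- The big `((n−1)+n+n)`-dimensional Hessian block matrix of the Bregman storage
function (here with `n+1` nodes). -/
noncomputable def bigHessian (e1 e2 : Fin m → Fin (n + 1)) (w : Fin m → ℝ)
    (bhat h : Fin (n + 1) → ℝ) (kP TP : Fin (n + 1) → ℝ)
    (Vbar : Fin (n + 1) → ℝ) (φbar : Fin n → ℝ) :
    Matrix (Fin n ⊕ (Fin (n + 1) ⊕ Fin (n + 1)))
      (Fin n ⊕ (Fin (n + 1) ⊕ Fin (n + 1))) ℝ :=
  Matrix.fromBlocks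
    (D1 e1 e2 * Γmat e1 e2 w Vbar
      * Matrix.diagonal (fun k => Real.cos (etabar e1 e2 φbar k)) * (D1 e1 e2)ᵀ)
    (Matrix.fromCols 0
      (D1 e1 e2 * Matrix.diagonal (fun k => Real.sin (etabar e1 e2 φbar k))
        * Γmat e1 e2 w Vbar * (absD e1 e2)ᵀ * Matrix.diagonal fun i => (Vbar i)⁻¹))
    (Matrix.fromRows 0
      (Matrix.diagonal (fun i => (Vbar i)⁻¹) * absD e1 e2 * Γmat e1 e2 w Vbar
        * Matrix.diagonal (fun k => Real.sin (etabar e1 e2 φbar k)) * (D1 e1 e2)ᵀ))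
    (Matrix.fromBlocks (Matrix.diagonal fun i => (kP i)⁻¹ * TP i) 0 0
      (Amat e1 e2 w bhat (etabar e1 e2 φbar) + Matrix.diagonal h))

end MicrogridHessian

open MicrogridHessian

section AuxLemmas

open Matrix Finset Real MicrogridHessian

variable {n m : ℕ}

lemma mh_sum_ite_or (e1 e2 : Fin m → Fin (n + 1)) (k : Fin m) (hk : e1 k ≠ e2 k)
    (g : Fin (n + 1) → ℝ) :
    ∑ i, (if e1 k = i ∨ e2 k = i then g i else 0) = g (e1 k) + g (e2 k) := by
  have hsplit : ∀ i : Fin (n + 1), (if e1 k = i ∨ e2 k = i then g i else 0)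
      = (if e1 k = i then g i else 0) + (if e2 k = i then g i else 0) := by
    intro i
    by_cases h1 : e1 k = i
    · have h2 : ¬ e2 k = i := fun h2 => hk (h1.trans h2.symm)
      simp [h1, h2]
    · by_cases h2 : e2 k = i <;> simp [h1, h2]
  rw [Finset.sum_congr rfl fun i _ => hsplit i, Finset.sum_add_distrib,
    Finset.sum_ite_eq, Finset.sum_ite_eq]
  simp

lemma mh_sum_dmat_mul (e1 e2 : Fin m → Fin (n + 1)) (k : Fin m) (hk : e1 k ≠ e2 k)
    (f : Fin (n + 1) → ℝ) :
    ∑ i, Dmat e1 e2 i k * f i = f (e1 k) - f (e2 k) := by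
  have hsplit : ∀ i : Fin (n + 1), Dmat e1 e2 i k * f i
      = (if e1 k = i then f i else 0) + (if e2 k = i then -f i else 0) := by
    intro i
    by_cases h1 : e1 k = i
    · have h2 : ¬ e2 k = i := fun h2 => hk (h1.trans h2.symm)
      simp [Dmat, h1, h2]
    · by_cases h2 : e2 k = i <;> simp [Dmat, h1, h2]
  rw [Finset.sum_congr rfl fun i _ => hsplit i, Finset.sum_add_distrib,
    Finset.sum_ite_eq, Finset.sum_ite_eq]
  simp [sub_eq_add_neg]

lemma mh_sum_absD_mul (e1 e2 : Fin m → Fin (n + 1)) (k : Fin m) (hk : e1 k ≠ e2 k)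
    (f : Fin (n + 1) → ℝ) :
    ∑ i, absD e1 e2 i k * f i = f (e1 k) + f (e2 k) := by
  rw [← mh_sum_ite_or e1 e2 k hk f]
  refine Finset.sum_congr rfl fun i _ => ?_
  by_cases hcnd : e1 k = i ∨ e2 k = i <;> simp [absD, hcnd]

def mhpad (x : Fin n → ℝ) : Fin (n + 1) → ℝ := Fin.snoc x 0

lemma mh_D1t_mulVec (e1 e2 : Fin m → Fin (n + 1)) (k : Fin m) (hk : e1 k ≠ e2 k)
    (x : Fin n → ℝ) :
    ((D1 e1 e2)ᵀ *ᵥ x) k = mhpad x (e1 k) - mhpad x (e2 k) := by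
  have h1 : ((D1 e1 e2)ᵀ *ᵥ x) k = ∑ i, Dmat e1 e2 (Fin.castSucc i) k * x i := by
    simp [Matrix.mulVec, dotProduct, D1, Matrix.transpose_apply]
  rw [h1, ← mh_sum_dmat_mul e1 e2 k hk (mhpad x), Fin.sum_univ_castSucc]
  simp [mhpad]

lemma mh_absDt_mulVec (e1 e2 : Fin m → Fin (n + 1)) (k : Fin m) (hk : e1 k ≠ e2 k)
    (u : Fin (n + 1) → ℝ) :
    ((absD e1 e2)ᵀ *ᵥ u) k = u (e1 k) + u (e2 k) := by
  have h1 : ((absD e1 e2)ᵀ *ᵥ u) k = ∑ i, absD e1 e2 i k * u i := by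
    simp [Matrix.mulVec, dotProduct, Matrix.transpose_apply]
  rw [h1, mh_sum_absD_mul e1 e2 k hk u]

lemma mh_quad1 (e1 e2 : Fin m → Fin (n + 1)) (γf cf : Fin m → ℝ) (x : Fin n → ℝ) :
    x ⬝ᵥ (D1 e1 e2 * Matrix.diagonal γf * Matrix.diagonal cf * (D1 e1 e2)ᵀ) *ᵥ x
      = ∑ k, γf k * cf k * (((D1 e1 e2)ᵀ *ᵥ x) k) ^ 2 := by
  simp only [Matrix.mul_assoc, ← Matrix.mulVec_mulVec]
  rw [Matrix.dotProduct_mulVec, ← Matrix.mulVec_transpose]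
  simp only [dotProduct, Matrix.mulVec_diagonal]
  exact Finset.sum_congr rfl fun k _ => by ring

lemma mh_quad2 (e1 e2 : Fin m → Fin (n + 1)) (sf γf : Fin m → ℝ) (vin : Fin (n + 1) → ℝ)
    (x : Fin n → ℝ) (z : Fin (n + 1) → ℝ) :
    x ⬝ᵥ (D1 e1 e2 * Matrix.diagonal sf * Matrix.diagonal γf * (absD e1 e2)ᵀ
        * Matrix.diagonal vin) *ᵥ z
      = ∑ k, sf k * γf k * (((D1 e1 e2)ᵀ *ᵥ x) k)
          * (((absD e1 e2)ᵀ *ᵥ fun i => vin i * z i) k) := by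
  have hz : Matrix.diagonal vin *ᵥ z = fun i => vin i * z i := by
    funext i; simp [Matrix.mulVec_diagonal]
  simp only [Matrix.mul_assoc, ← Matrix.mulVec_mulVec]
  rw [hz, Matrix.dotProduct_mulVec, ← Matrix.mulVec_transpose]
  simp only [dotProduct, Matrix.mulVec_diagonal]
  exact Finset.sum_congr rfl fun k _ => by ring

lemma mh_quad3 (e1 e2 : Fin m → Fin (n + 1)) (γf sf : Fin m → ℝ) (vin : Fin (n + 1) → ℝ)
    (x : Fin n → ℝ) (z : Fin (n + 1) → ℝ) :
    z ⬝ᵥ (Matrix.diagonal vin * absD e1 e2 * Matrix.diagonal γf * Matrix.diagonal sf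
        * (D1 e1 e2)ᵀ) *ᵥ x
      = ∑ k, sf k * γf k * (((D1 e1 e2)ᵀ *ᵥ x) k)
          * (((absD e1 e2)ᵀ *ᵥ fun i => vin i * z i) k) := by
  have hT : (Matrix.diagonal vin * absD e1 e2 * Matrix.diagonal γf * Matrix.diagonal sf
        * (D1 e1 e2)ᵀ)
      = (D1 e1 e2 * Matrix.diagonal sf * Matrix.diagonal γf * (absD e1 e2)ᵀ
        * Matrix.diagonal vin)ᵀ := by
    simp only [Matrix.transpose_mul, Matrix.transpose_transpose, Matrix.diagonal_transpose,
      Matrix.mul_assoc]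
  rw [hT, Matrix.dotProduct_mulVec, Matrix.vecMul_transpose, dotProduct_comm,
    mh_quad2 e1 e2 sf γf vin x z]

lemma mh_quad5 (d : Fin (n + 1) → ℝ) (t : Fin (n + 1) → ℝ) :
    t ⬝ᵥ (Matrix.diagonal d) *ᵥ t = ∑ i, d i * t i ^ 2 := by
  simp only [dotProduct, Matrix.mulVec_diagonal]
  exact Finset.sum_congr rfl fun i _ => by ring

lemma mh_pair_sum (e1 e2 : Fin m → Fin (n + 1)) (k : Fin m) (hk : e1 k ≠ e2 k)
    (r : ℝ) (z : Fin (n + 1) → ℝ) :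
    ∑ i, ∑ j, z i * (if (e1 k = i ∧ e2 k = j) ∨ (e1 k = j ∧ e2 k = i) then r else 0) * z j
      = 2 * r * z (e1 k) * z (e2 k) := by
  have hsplit : ∀ i j : Fin (n + 1),
      (if (e1 k = i ∧ e2 k = j) ∨ (e1 k = j ∧ e2 k = i) then r else 0)
        = (if e1 k = i ∧ e2 k = j then r else 0) + (if e1 k = j ∧ e2 k = i then r else 0) := by
    intro i j
    by_cases h1 : e1 k = i ∧ e2 k = j
    · have h2 : ¬ (e1 k = j ∧ e2 k = i) := fun h2 => hk (h2.1.trans h1.2.symm)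
      rw [if_pos (Or.inl h1), if_pos h1, if_neg h2, add_zero]
    · by_cases h2 : e1 k = j ∧ e2 k = i
      · rw [if_pos (Or.inr h2), if_neg h1, if_pos h2, zero_add]
      · rw [if_neg (by rintro (hc | hc); exacts [h1 hc, h2 hc]), if_neg h1, if_neg h2, add_zero]
  have hgen : ∀ a b : Fin (n + 1),
      ∑ i, ∑ j, z i * (if a = i ∧ b = j then r else 0) * z j = z a * r * z b := by
    intro a b
    have hinner : ∀ i, ∑ j, z i * (if a = i ∧ b = j then r else 0) * z j
        = if a = i then z i * r * z b else 0 := by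
      intro i
      by_cases hai : a = i
      · rw [if_pos hai]
        have h2 : ∀ j, z i * (if a = i ∧ b = j then r else 0) * z j
            = if b = j then z i * r * z j else 0 := by
          intro j; by_cases hbj : b = j <;> simp [hai, hbj]
        rw [Finset.sum_congr rfl fun j _ => h2 j, Finset.sum_ite_eq]; simp
      · rw [if_neg hai]
        exact Finset.sum_eq_zero fun j _ => by simp [hai]
    rw [Finset.sum_congr rfl fun i _ => hinner i, Finset.sum_ite_eq]; simp
  have hgen2 : ∀ a b : Fin (n + 1),
      ∑ i, ∑ j, z i * (if a = j ∧ b = i then r else 0) * z j = z b * r * z a := by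
    intro a b
    have hinner : ∀ i, ∑ j, z i * (if a = j ∧ b = i then r else 0) * z j
        = if b = i then z i * r * z a else 0 := by
      intro i
      by_cases hbi : b = i
      · rw [if_pos hbi]
        have h2 : ∀ j, z i * (if a = j ∧ b = i then r else 0) * z j
            = if a = j then z i * r * z j else 0 := by
          intro j; by_cases haj : a = j <;> simp [haj, hbi]
        rw [Finset.sum_congr rfl fun j _ => h2 j, Finset.sum_ite_eq]; simp
      · rw [if_neg hbi]
        exact Finset.sum_eq_zero fun j _ => by simp [hbi]
    rw [Finset.sum_congr rfl fun i _ => hinner i, Finset.sum_ite_eq]; simp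
  calc ∑ i, ∑ j, z i * (if (e1 k = i ∧ e2 k = j) ∨ (e1 k = j ∧ e2 k = i) then r else 0) * z j
      = ∑ i, ∑ j, (z i * (if e1 k = i ∧ e2 k = j then r else 0) * z j
          + z i * (if e1 k = j ∧ e2 k = i then r else 0) * z j) := by
        refine Finset.sum_congr rfl fun i _ => Finset.sum_congr rfl fun j _ => ?_
        rw [hsplit i j]; ring
    _ = (∑ i, ∑ j, z i * (if e1 k = i ∧ e2 k = j then r else 0) * z j)
          + ∑ i, ∑ j, z i * (if e1 k = j ∧ e2 k = i then r else 0) * z j := by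
        rw [← Finset.sum_add_distrib]
        exact Finset.sum_congr rfl fun i _ => Finset.sum_add_distrib
    _ = z (e1 k) * r * z (e2 k) + z (e2 k) * r * z (e1 k) := by rw [hgen, hgen2]
    _ = 2 * r * z (e1 k) * z (e2 k) := by ring

lemma mh_quad4 (e1 e2 : Fin m → Fin (n + 1)) (hloop : ∀ k, e1 k ≠ e2 k)
    (w : Fin m → ℝ) (bhat h : Fin (n + 1) → ℝ) (η : Fin m → ℝ) (z : Fin (n + 1) → ℝ) :
    z ⬝ᵥ (Amat e1 e2 w bhat η + Matrix.diagonal h) *ᵥ z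
      = (∑ i, (bhat i + h i) * z i ^ 2)
        + (∑ k, w k * (z (e1 k) ^ 2 + z (e2 k) ^ 2))
        - ∑ k, 2 * (w k * Real.cos (η k)) * z (e1 k) * z (e2 k) := by
  rw [Matrix.add_mulVec, dotProduct_add, mh_quad5]
  have hentry : ∀ i j, Amat e1 e2 w bhat η i j
      = (if i = j then Bii e1 e2 w bhat i else 0)
        - ∑ k, (if (e1 k = i ∧ e2 k = j) ∨ (e1 k = j ∧ e2 k = i)
            then w k * Real.cos (η k) else 0) := by
    intro i j
    by_cases hij : i = j
    · subst hij
      have hzero : ∑ k, (if e1 k = i ∧ e2 k = i then w k * Real.cos (η k) else 0) = 0 :=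
        Finset.sum_eq_zero fun k _ => if_neg (fun hc => hloop k (hc.1.trans hc.2.symm))
      simp [Amat, hzero]
    · simp [Amat, hij]
  have hform : z ⬝ᵥ (Amat e1 e2 w bhat η) *ᵥ z
      = ∑ i, ∑ j, z i * Amat e1 e2 w bhat η i j * z j := by
    simp only [dotProduct, Matrix.mulVec, Finset.mul_sum]
    exact Finset.sum_congr rfl fun i _ => Finset.sum_congr rfl fun j _ => by ring
  have hsplit : ∀ i, ∑ j, z i * Amat e1 e2 w bhat η i j * z j
      = Bii e1 e2 w bhat i * z i ^ 2
        - ∑ k, ∑ j, z i * (if (e1 k = i ∧ e2 k = j) ∨ (e1 k = j ∧ e2 k = i)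
            then w k * Real.cos (η k) else 0) * z j := by
    intro i
    have h1 : ∀ j, z i * Amat e1 e2 w bhat η i j * z j
        = (if i = j then Bii e1 e2 w bhat i * z i ^ 2 else 0)
          - ∑ k, z i * (if (e1 k = i ∧ e2 k = j) ∨ (e1 k = j ∧ e2 k = i)
              then w k * Real.cos (η k) else 0) * z j := by
      intro j
      rw [hentry i j, mul_sub, sub_mul, Finset.mul_sum, Finset.sum_mul]
      congr 1
      by_cases hij : i = j
      · rw [if_pos hij, if_pos hij]; subst hij; ring
      · rw [if_neg hij, if_neg hij, mul_zero, zero_mul]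
    rw [Finset.sum_congr rfl fun j _ => h1 j, Finset.sum_sub_distrib,
      Finset.sum_ite_eq, Finset.sum_comm]
    simp
  rw [hform, Finset.sum_congr rfl fun i _ => hsplit i, Finset.sum_sub_distrib]
  have hBterm : ∑ i, Bii e1 e2 w bhat i * z i ^ 2
      = (∑ i, bhat i * z i ^ 2) + ∑ k, w k * (z (e1 k) ^ 2 + z (e2 k) ^ 2) := by
    have h1 : ∀ i, Bii e1 e2 w bhat i * z i ^ 2
        = bhat i * z i ^ 2 + ∑ k, (if e1 k = i ∨ e2 k = i then w k * z i ^ 2 else 0) := by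
      intro i
      rw [Bii, add_mul, Finset.sum_mul]
      congr 1
      exact Finset.sum_congr rfl fun k _ => by
        by_cases hcnd : e1 k = i ∨ e2 k = i <;> simp [hcnd]
    rw [Finset.sum_congr rfl fun i _ => h1 i, Finset.sum_add_distrib]
    congr 1
    rw [Finset.sum_comm]
    exact Finset.sum_congr rfl fun k _ => by
      rw [mh_sum_ite_or e1 e2 k (hloop k) (fun i => w k * z i ^ 2)]; ring
  have hpair : ∀ k : Fin m, ∑ i, ∑ j, z i * (if (e1 k = i ∧ e2 k = j) ∨ (e1 k = j ∧ e2 k = i)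
      then w k * Real.cos (η k) else 0) * z j
        = 2 * (w k * Real.cos (η k)) * z (e1 k) * z (e2 k) :=
    fun k => mh_pair_sum e1 e2 k (hloop k) _ z
  have hcomm : ∑ i : Fin (n + 1), ∑ k : Fin m,
      ∑ j : Fin (n + 1), (z i * if e1 k = i ∧ e2 k = j ∨ e1 k = j ∧ e2 k = i
        then w k * Real.cos (η k) else 0) * z j
      = ∑ k : Fin m, ∑ i : Fin (n + 1),
      ∑ j : Fin (n + 1), (z i * if e1 k = i ∧ e2 k = j ∨ e1 k = j ∧ e2 k = i
        then w k * Real.cos (η k) else 0) * z j := Finset.sum_comm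
  rw [hcomm, Finset.sum_congr rfl fun k _ => hpair k, hBterm]
  have hbh : ∑ i, (bhat i + h i) * z i ^ 2
      = (∑ i, bhat i * z i ^ 2) + ∑ i, h i * z i ^ 2 := by
    rw [← Finset.sum_add_distrib]
    exact Finset.sum_congr rfl fun i _ => by ring
  rw [hbh]
  ring

end AuxLemmas

/-- Strict convexity of the Bregman storage function (Proposition 1):
if `η̄_k ∈ (−π/2, π/2)` for every edge and the diagonal dominance conditions
`m_ii > ∑_{ℓ : {i,ℓ}∈E} B_iℓ / cos η̄_{k(i,ℓ)}` hold, then the Hessian block matrix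
is positive definite. -/
theorem bregman_hessian_posDef
    (n m : ℕ)
    (e1 e2 : Fin m → Fin (n + 1)) (hloop : ∀ k, e1 k ≠ e2 k)
    (hsimple : ∀ k k', k ≠ k' →
      ¬ ((e1 k = e1 k' ∧ e2 k = e2 k') ∨ (e1 k = e2 k' ∧ e2 k = e1 k')))
    (hconn : (SimpleGraph.fromRel fun i j => ∃ k, e1 k = i ∧ e2 k = j).Connected)
    (w : Fin m → ℝ) (hw : ∀ k, 0 < w k)
    (bhat : Fin (n + 1) → ℝ) (hbhat : ∀ i, 0 ≤ bhat i)
    (kP TP : Fin (n + 1) → ℝ) (hkP : ∀ i, 0 < kP i) (hTP : ∀ i, 0 < TP i)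
    (Vbar : Fin (n + 1) → ℝ) (hVbar : ∀ i, 0 < Vbar i)
    (φbar : Fin n → ℝ) (h : Fin (n + 1) → ℝ)
    (hη : ∀ k, etabar e1 e2 φbar k ∈ Set.Ioo (-(Real.pi / 2)) (Real.pi / 2))
    (hdom : ∀ i,
      bhat i
        + (∑ k, if e1 k = i ∨ e2 k = i then
            w k * (1 - Vbar (other e1 e2 k i) / Vbar i
              * Real.sin (etabar e1 e2 φbar k) ^ 2
              / Real.cos (etabar e1 e2 φbar k)) else 0)
        + h i
      > ∑ k, if e1 k = i ∨ e2 k = i then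
          w k / Real.cos (etabar e1 e2 φbar k) else 0) :
    (bigHessian e1 e2 w bhat h kP TP Vbar φbar).PosDef := by
  classical
  have hc : ∀ k, 0 < Real.cos (etabar e1 e2 φbar k) :=
    fun k => Real.cos_pos_of_mem_Ioo (hη k)
  refine Matrix.PosDef.of_dotProduct_mulVec_pos ?_ ?_
  · -- Hermitian part
    show (bigHessian e1 e2 w bhat h kP TP Vbar φbar)ᴴ = bigHessian e1 e2 w bhat h kP TP Vbar φbar
    rw [Matrix.conjTranspose_eq_transpose_of_trivial, bigHessian, Matrix.fromBlocks_transpose,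
      Matrix.transpose_fromCols, Matrix.transpose_fromRows, Matrix.fromBlocks_transpose]
    have hdcomm : ∀ (a b : Fin m → ℝ), Matrix.diagonal a * Matrix.diagonal b
        = Matrix.diagonal b * Matrix.diagonal a := by
      intro a b
      rw [Matrix.diagonal_mul_diagonal, Matrix.diagonal_mul_diagonal]
      exact congrArg Matrix.diagonal (mul_comm a b)
    have h11 : (D1 e1 e2 * Γmat e1 e2 w Vbar
        * Matrix.diagonal (fun k => Real.cos (etabar e1 e2 φbar k)) * (D1 e1 e2)ᵀ)ᵀ
        = D1 e1 e2 * Γmat e1 e2 w Vbar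
          * Matrix.diagonal (fun k => Real.cos (etabar e1 e2 φbar k)) * (D1 e1 e2)ᵀ := by
      simp only [Matrix.transpose_mul, Matrix.transpose_transpose, Matrix.diagonal_transpose,
        Γmat, Matrix.mul_assoc]
      rw [← Matrix.mul_assoc (Matrix.diagonal _) (Matrix.diagonal _), hdcomm, Matrix.mul_assoc]
    have h13 : (D1 e1 e2 * Matrix.diagonal (fun k => Real.sin (etabar e1 e2 φbar k))
        * Γmat e1 e2 w Vbar * (absD e1 e2)ᵀ * Matrix.diagonal fun i => (Vbar i)⁻¹)ᵀ
        = Matrix.diagonal (fun i => (Vbar i)⁻¹) * absD e1 e2 * Γmat e1 e2 w Vbar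
          * Matrix.diagonal (fun k => Real.sin (etabar e1 e2 φbar k)) * (D1 e1 e2)ᵀ := by
      simp only [Matrix.transpose_mul, Matrix.transpose_transpose, Matrix.diagonal_transpose,
        Γmat, Matrix.mul_assoc]
    have h31 : (Matrix.diagonal (fun i => (Vbar i)⁻¹) * absD e1 e2 * Γmat e1 e2 w Vbar
        * Matrix.diagonal (fun k => Real.sin (etabar e1 e2 φbar k)) * (D1 e1 e2)ᵀ)ᵀ
        = D1 e1 e2 * Matrix.diagonal (fun k => Real.sin (etabar e1 e2 φbar k))
          * Γmat e1 e2 w Vbar * (absD e1 e2)ᵀ * Matrix.diagonal fun i => (Vbar i)⁻¹ := by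
      simp only [Matrix.transpose_mul, Matrix.transpose_transpose, Matrix.diagonal_transpose,
        Γmat, Matrix.mul_assoc]
    have hAmat : (Amat e1 e2 w bhat (etabar e1 e2 φbar))ᵀ
        = Amat e1 e2 w bhat (etabar e1 e2 φbar) := by
      ext i j
      rw [Matrix.transpose_apply]
      by_cases hij : i = j
      · rw [hij]
      · have hji : ¬ j = i := fun hcc => hij hcc.symm
        simp only [Amat, Matrix.of_apply, if_neg hij, if_neg hji]
        congr 1
        exact Finset.sum_congr rfl fun k _ => if_congr or_comm rfl rfl
    simp only [Matrix.transpose_zero, Matrix.transpose_add, Matrix.diagonal_transpose,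
      hAmat, h11, h13, h31]
  · intro v hv
    have hsv : star v = v := funext fun i => star_trivial _
    set x : Fin n → ℝ := fun i => v (Sum.inl i) with hxdef
    set t : Fin (n + 1) → ℝ := fun i => v (Sum.inr (Sum.inl i)) with htdef
    set z : Fin (n + 1) → ℝ := fun i => v (Sum.inr (Sum.inr i)) with hzdef
    have hvelim : v = Sum.elim x (Sum.elim t z) := by
      funext p; rcases p with i | i | i <;> rfl
    have hD1x : ∀ k, ((D1 e1 e2)ᵀ *ᵥ x) k = mhpad x (e1 k) - mhpad x (e2 k) :=
      fun k => mh_D1t_mulVec e1 e2 k (hloop k) x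
    have habs : ∀ k, ((absD e1 e2)ᵀ *ᵥ fun i => (Vbar i)⁻¹ * z i) k
        = (Vbar (e1 k))⁻¹ * z (e1 k) + (Vbar (e2 k))⁻¹ * z (e2 k) :=
      fun k => mh_absDt_mulVec e1 e2 k (hloop k) _
    have hQ : v ⬝ᵥ (bigHessian e1 e2 w bhat h kP TP Vbar φbar) *ᵥ v
        = (∑ k, w k * Vbar (e1 k) * Vbar (e2 k) * Real.cos (etabar e1 e2 φbar k) * (mhpad x (e1 k) - mhpad x (e2 k)) ^ 2)
          + 2 * (∑ k, Real.sin (etabar e1 e2 φbar k) * (w k * Vbar (e1 k) * Vbar (e2 k)) * (mhpad x (e1 k) - mhpad x (e2 k)) * ((Vbar (e1 k))⁻¹ * z (e1 k) + (Vbar (e2 k))⁻¹ * z (e2 k)))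
          + (∑ i, (kP i)⁻¹ * TP i * t i ^ 2)
          + ((∑ i, (bhat i + h i) * z i ^ 2) + ((∑ k, w k * (z (e1 k) ^ 2 + z (e2 k) ^ 2)) - ∑ k, 2 * (w k * Real.cos (etabar e1 e2 φbar k)) * z (e1 k) * z (e2 k))) := by
      conv_lhs => rw [hvelim]
      rw [bigHessian,
        show Γmat e1 e2 w Vbar
          = Matrix.diagonal (fun k => w k * Vbar (e1 k) * Vbar (e2 k)) from rfl]
      rw [Matrix.fromBlocks_mulVec]
      rw [sumElim_dotProduct_sumElim]
      simp only [Matrix.fromCols_mulVec_sumElim, Matrix.fromRows_mulVec,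
        Matrix.fromBlocks_mulVec, Matrix.zero_mulVec, zero_add, add_zero,
        dotProduct_add, sumElim_dotProduct_sumElim, dotProduct_zero,
        Sum.elim_comp_inl, Sum.elim_comp_inr]
      rw [mh_quad1 e1 e2 (fun k => w k * Vbar (e1 k) * Vbar (e2 k))
            (fun k => Real.cos (etabar e1 e2 φbar k)) x,
          mh_quad2 e1 e2 (fun k => Real.sin (etabar e1 e2 φbar k))
            (fun k => w k * Vbar (e1 k) * Vbar (e2 k)) (fun i => (Vbar i)⁻¹) x z,
          mh_quad3 e1 e2 (fun k => w k * Vbar (e1 k) * Vbar (e2 k))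
            (fun k => Real.sin (etabar e1 e2 φbar k)) (fun i => (Vbar i)⁻¹) x z,
          mh_quad5 (fun i => (kP i)⁻¹ * TP i) t,
          mh_quad4 e1 e2 hloop w bhat h (etabar e1 e2 φbar) z]
      simp only [hD1x, habs]
      ring
    set dfun : Fin (n + 1) → ℝ := fun i =>
      (bhat i + (∑ k, if e1 k = i ∨ e2 k = i then
        w k * (1 - Vbar (other e1 e2 k i) / Vbar i
          * Real.sin (etabar e1 e2 φbar k) ^ 2
          / Real.cos (etabar e1 e2 φbar k)) else 0)
      + h i)
    - ∑ k, if e1 k = i ∨ e2 k = i then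
        w k / Real.cos (etabar e1 e2 φbar k) else 0 with hdfun
    have hdpos : ∀ i, 0 < dfun i := fun i => sub_pos.2 (hdom i)
    have hother1 : ∀ k, other e1 e2 k (e1 k) = e2 k := fun k => by simp [other]
    have hother2 : ∀ k, other e1 e2 k (e2 k) = e1 k := fun k => by
      simp [other, hloop k]
    have hP3eq : ∑ i, dfun i * z i ^ 2
        = (∑ i, (bhat i + h i) * z i ^ 2) + ∑ k, ((w k * (1 - Vbar (e2 k) / Vbar (e1 k) * Real.sin (etabar e1 e2 φbar k) ^ 2 / Real.cos (etabar e1 e2 φbar k)) - w k / Real.cos (etabar e1 e2 φbar k)) * z (e1 k) ^ 2 + (w k * (1 - Vbar (e1 k) / Vbar (e2 k) * Real.sin (etabar e1 e2 φbar k) ^ 2 / Real.cos (etabar e1 e2 φbar k)) - w k / Real.cos (etabar e1 e2 φbar k)) * z (e2 k) ^ 2) := by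
      have hterm : ∀ i, dfun i * z i ^ 2 = (bhat i + h i) * z i ^ 2
          + ∑ k, (if e1 k = i ∨ e2 k = i then
              (w k * (1 - Vbar (other e1 e2 k i) / Vbar i
                * Real.sin (etabar e1 e2 φbar k) ^ 2 / Real.cos (etabar e1 e2 φbar k))
                - w k / Real.cos (etabar e1 e2 φbar k)) * z i ^ 2 else 0) := by
        intro i
        have hmerge : (∑ k, if e1 k = i ∨ e2 k = i then
              w k * (1 - Vbar (other e1 e2 k i) / Vbar i
                * Real.sin (etabar e1 e2 φbar k) ^ 2 / Real.cos (etabar e1 e2 φbar k)) else 0)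
            - (∑ k, if e1 k = i ∨ e2 k = i then w k / Real.cos (etabar e1 e2 φbar k) else 0)
            = ∑ k, (if e1 k = i ∨ e2 k = i then
                w k * (1 - Vbar (other e1 e2 k i) / Vbar i
                  * Real.sin (etabar e1 e2 φbar k) ^ 2 / Real.cos (etabar e1 e2 φbar k))
                  - w k / Real.cos (etabar e1 e2 φbar k) else 0) := by
          rw [← Finset.sum_sub_distrib]
          exact Finset.sum_congr rfl fun k _ => by
            by_cases hck : e1 k = i ∨ e2 k = i <;> simp [hck]
        have hstep : dfun i * z i ^ 2 = (bhat i + h i) * z i ^ 2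
            + (∑ k, (if e1 k = i ∨ e2 k = i then
                w k * (1 - Vbar (other e1 e2 k i) / Vbar i
                  * Real.sin (etabar e1 e2 φbar k) ^ 2 / Real.cos (etabar e1 e2 φbar k))
                  - w k / Real.cos (etabar e1 e2 φbar k) else 0)) * z i ^ 2 := by
          rw [hdfun, ← hmerge]; ring
        rw [hstep, Finset.sum_mul]
        congr 1
        exact Finset.sum_congr rfl fun k _ => by
          by_cases hck : e1 k = i ∨ e2 k = i <;> simp [hck]
      rw [Finset.sum_congr rfl fun i _ => hterm i, Finset.sum_add_distrib]
      congr 1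
      rw [Finset.sum_comm]
      refine Finset.sum_congr rfl fun k _ => ?_
      rw [mh_sum_ite_or e1 e2 k (hloop k)
        (fun i => (w k * (1 - Vbar (other e1 e2 k i) / Vbar i
          * Real.sin (etabar e1 e2 φbar k) ^ 2 / Real.cos (etabar e1 e2 φbar k))
          - w k / Real.cos (etabar e1 e2 φbar k)) * z i ^ 2)]
      rw [hother1 k, hother2 k]
    have hedge : ∀ k : Fin m,
        w k * Vbar (e1 k) * Vbar (e2 k) * Real.cos (etabar e1 e2 φbar k) * (mhpad x (e1 k) - mhpad x (e2 k)) ^ 2 + 2 * (Real.sin (etabar e1 e2 φbar k) * (w k * Vbar (e1 k) * Vbar (e2 k)) * (mhpad x (e1 k) - mhpad x (e2 k)) * ((Vbar (e1 k))⁻¹ * z (e1 k) + (Vbar (e2 k))⁻¹ * z (e2 k))) + (w k * (z (e1 k) ^ 2 + z (e2 k) ^ 2) - (2 * (w k * Real.cos (etabar e1 e2 φbar k)) * z (e1 k) * z (e2 k)))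
          = w k * Vbar (e1 k) * Vbar (e2 k) * Real.cos (etabar e1 e2 φbar k) * ((mhpad x (e1 k) - mhpad x (e2 k)) + Real.sin (etabar e1 e2 φbar k) / Real.cos (etabar e1 e2 φbar k) * ((Vbar (e1 k))⁻¹ * z (e1 k) + (Vbar (e2 k))⁻¹ * z (e2 k))) ^ 2 + w k / Real.cos (etabar e1 e2 φbar k) * (z (e1 k) - z (e2 k)) ^ 2 + ((w k * (1 - Vbar (e2 k) / Vbar (e1 k) * Real.sin (etabar e1 e2 φbar k) ^ 2 / Real.cos (etabar e1 e2 φbar k)) - w k / Real.cos (etabar e1 e2 φbar k)) * z (e1 k) ^ 2 + (w k * (1 - Vbar (e1 k) / Vbar (e2 k) * Real.sin (etabar e1 e2 φbar k) ^ 2 / Real.cos (etabar e1 e2 φbar k)) - w k / Real.cos (etabar e1 e2 φbar k)) * z (e2 k) ^ 2) := by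
      intro k
      have hcne := (hc k).ne'
      have hV1 := (hVbar (e1 k)).ne'
      have hV2 := (hVbar (e2 k)).ne'
      have hpyth := Real.sin_sq_add_cos_sq (etabar e1 e2 φbar k)
      field_simp
      linear_combination (-(2 * w k * z (e1 k) * z (e2 k) * Vbar (e1 k) * Vbar (e2 k))) * hpyth
    have hsum1 : ∑ k, (w k * Vbar (e1 k) * Vbar (e2 k) * Real.cos (etabar e1 e2 φbar k) * (mhpad x (e1 k) - mhpad x (e2 k)) ^ 2 + 2 * (Real.sin (etabar e1 e2 φbar k) * (w k * Vbar (e1 k) * Vbar (e2 k)) * (mhpad x (e1 k) - mhpad x (e2 k)) * ((Vbar (e1 k))⁻¹ * z (e1 k) + (Vbar (e2 k))⁻¹ * z (e2 k))) + (w k * (z (e1 k) ^ 2 + z (e2 k) ^ 2) - (2 * (w k * Real.cos (etabar e1 e2 φbar k)) * z (e1 k) * z (e2 k))))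
        = (∑ k, w k * Vbar (e1 k) * Vbar (e2 k) * Real.cos (etabar e1 e2 φbar k) * (mhpad x (e1 k) - mhpad x (e2 k)) ^ 2) + 2 * (∑ k, Real.sin (etabar e1 e2 φbar k) * (w k * Vbar (e1 k) * Vbar (e2 k)) * (mhpad x (e1 k) - mhpad x (e2 k)) * ((Vbar (e1 k))⁻¹ * z (e1 k) + (Vbar (e2 k))⁻¹ * z (e2 k))) + ((∑ k, w k * (z (e1 k) ^ 2 + z (e2 k) ^ 2)) - ∑ k, 2 * (w k * Real.cos (etabar e1 e2 φbar k)) * z (e1 k) * z (e2 k)) := by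
      rw [Finset.sum_add_distrib, Finset.sum_add_distrib, Finset.sum_sub_distrib,
        Finset.mul_sum]
    have hsum2 : ∑ k, (w k * Vbar (e1 k) * Vbar (e2 k) * Real.cos (etabar e1 e2 φbar k) * ((mhpad x (e1 k) - mhpad x (e2 k)) + Real.sin (etabar e1 e2 φbar k) / Real.cos (etabar e1 e2 φbar k) * ((Vbar (e1 k))⁻¹ * z (e1 k) + (Vbar (e2 k))⁻¹ * z (e2 k))) ^ 2 + w k / Real.cos (etabar e1 e2 φbar k) * (z (e1 k) - z (e2 k)) ^ 2 + ((w k * (1 - Vbar (e2 k) / Vbar (e1 k) * Real.sin (etabar e1 e2 φbar k) ^ 2 / Real.cos (etabar e1 e2 φbar k)) - w k / Real.cos (etabar e1 e2 φbar k)) * z (e1 k) ^ 2 + (w k * (1 - Vbar (e1 k) / Vbar (e2 k) * Real.sin (etabar e1 e2 φbar k) ^ 2 / Real.cos (etabar e1 e2 φbar k)) - w k / Real.cos (etabar e1 e2 φbar k)) * z (e2 k) ^ 2))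
        = (∑ k, w k * Vbar (e1 k) * Vbar (e2 k) * Real.cos (etabar e1 e2 φbar k) * ((mhpad x (e1 k) - mhpad x (e2 k)) + Real.sin (etabar e1 e2 φbar k) / Real.cos (etabar e1 e2 φbar k) * ((Vbar (e1 k))⁻¹ * z (e1 k) + (Vbar (e2 k))⁻¹ * z (e2 k))) ^ 2) + (∑ k, w k / Real.cos (etabar e1 e2 φbar k) * (z (e1 k) - z (e2 k)) ^ 2) + ∑ k, ((w k * (1 - Vbar (e2 k) / Vbar (e1 k) * Real.sin (etabar e1 e2 φbar k) ^ 2 / Real.cos (etabar e1 e2 φbar k)) - w k / Real.cos (etabar e1 e2 φbar k)) * z (e1 k) ^ 2 + (w k * (1 - Vbar (e1 k) / Vbar (e2 k) * Real.sin (etabar e1 e2 φbar k) ^ 2 / Real.cos (etabar e1 e2 φbar k)) - w k / Real.cos (etabar e1 e2 φbar k)) * z (e2 k) ^ 2) := by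
      rw [Finset.sum_add_distrib, Finset.sum_add_distrib]
    have hsumEq : ∑ k, (w k * Vbar (e1 k) * Vbar (e2 k) * Real.cos (etabar e1 e2 φbar k) * (mhpad x (e1 k) - mhpad x (e2 k)) ^ 2 + 2 * (Real.sin (etabar e1 e2 φbar k) * (w k * Vbar (e1 k) * Vbar (e2 k)) * (mhpad x (e1 k) - mhpad x (e2 k)) * ((Vbar (e1 k))⁻¹ * z (e1 k) + (Vbar (e2 k))⁻¹ * z (e2 k))) + (w k * (z (e1 k) ^ 2 + z (e2 k) ^ 2) - (2 * (w k * Real.cos (etabar e1 e2 φbar k)) * z (e1 k) * z (e2 k))))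
        = ∑ k, (w k * Vbar (e1 k) * Vbar (e2 k) * Real.cos (etabar e1 e2 φbar k) * ((mhpad x (e1 k) - mhpad x (e2 k)) + Real.sin (etabar e1 e2 φbar k) / Real.cos (etabar e1 e2 φbar k) * ((Vbar (e1 k))⁻¹ * z (e1 k) + (Vbar (e2 k))⁻¹ * z (e2 k))) ^ 2 + w k / Real.cos (etabar e1 e2 φbar k) * (z (e1 k) - z (e2 k)) ^ 2 + ((w k * (1 - Vbar (e2 k) / Vbar (e1 k) * Real.sin (etabar e1 e2 φbar k) ^ 2 / Real.cos (etabar e1 e2 φbar k)) - w k / Real.cos (etabar e1 e2 φbar k)) * z (e1 k) ^ 2 + (w k * (1 - Vbar (e1 k) / Vbar (e2 k) * Real.sin (etabar e1 e2 φbar k) ^ 2 / Real.cos (etabar e1 e2 φbar k)) - w k / Real.cos (etabar e1 e2 φbar k)) * z (e2 k) ^ 2)) :=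
      Finset.sum_congr rfl fun k _ => hedge k
    have hfinal : v ⬝ᵥ (bigHessian e1 e2 w bhat h kP TP Vbar φbar) *ᵥ v
        = (∑ k, w k * Vbar (e1 k) * Vbar (e2 k) * Real.cos (etabar e1 e2 φbar k) * ((mhpad x (e1 k) - mhpad x (e2 k)) + Real.sin (etabar e1 e2 φbar k) / Real.cos (etabar e1 e2 φbar k) * ((Vbar (e1 k))⁻¹ * z (e1 k) + (Vbar (e2 k))⁻¹ * z (e2 k))) ^ 2) + (∑ k, w k / Real.cos (etabar e1 e2 φbar k) * (z (e1 k) - z (e2 k)) ^ 2) + (∑ i, dfun i * z i ^ 2) + (∑ i, (kP i)⁻¹ * TP i * t i ^ 2) := by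
      rw [hQ]
      linarith [hsum1, hsum2, hsumEq, hP3eq]
    have hSp : (0:ℝ) ≤ ∑ k, w k * Vbar (e1 k) * Vbar (e2 k) * Real.cos (etabar e1 e2 φbar k) * ((mhpad x (e1 k) - mhpad x (e2 k)) + Real.sin (etabar e1 e2 φbar k) / Real.cos (etabar e1 e2 φbar k) * ((Vbar (e1 k))⁻¹ * z (e1 k) + (Vbar (e2 k))⁻¹ * z (e2 k))) ^ 2 :=
      Finset.sum_nonneg fun k _ => mul_nonneg
        (mul_pos (mul_pos (mul_pos (hw k) (hVbar (e1 k))) (hVbar (e2 k))) (hc k)).le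
        (sq_nonneg _)
    have hSq : (0:ℝ) ≤ ∑ k, w k / Real.cos (etabar e1 e2 φbar k) * (z (e1 k) - z (e2 k)) ^ 2 :=
      Finset.sum_nonneg fun k _ => mul_nonneg (div_nonneg (hw k).le (hc k).le) (sq_nonneg _)
    have hSd : (0:ℝ) ≤ ∑ i, dfun i * z i ^ 2 :=
      Finset.sum_nonneg fun i _ => mul_nonneg (hdpos i).le (sq_nonneg _)
    have hSt : (0:ℝ) ≤ ∑ i, (kP i)⁻¹ * TP i * t i ^ 2 :=
      Finset.sum_nonneg fun i _ => mul_nonneg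
        (mul_nonneg (inv_nonneg.2 (hkP i).le) (hTP i).le) (sq_nonneg _)
    rw [hsv, hfinal]
    by_cases hz0 : z = 0
    · by_cases ht0 : t = 0
      · -- x must be nonzero
        have hx0 : x ≠ 0 := by
          intro hx0
          apply hv
          funext p
          rcases p with i | i | i
          · simpa using congrFun hx0 i
          · simpa using congrFun ht0 i
          · simpa using congrFun hz0 i
        have hz1 : ∀ i, z i = 0 := fun i => by rw [hz0]; rfl
        have hδex : ∃ k, mhpad x (e1 k) - mhpad x (e2 k) ≠ 0 := by
          by_contra hno
          push_neg at hno
          apply hx0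
          have hf : ∀ a b,
              (SimpleGraph.fromRel fun i j => ∃ k, e1 k = i ∧ e2 k = j).Adj a b →
                mhpad x a = mhpad x b := by
            intro a b hab
            rw [SimpleGraph.fromRel_adj] at hab
            obtain ⟨-, hcase⟩ := hab
            rcases hcase with ⟨k, hk1, hk2⟩ | ⟨k, hk1, hk2⟩
            · rw [← hk1, ← hk2]; exact sub_eq_zero.mp (hno k)
            · rw [← hk1, ← hk2]; exact (sub_eq_zero.mp (hno k)).symm
          have hreach : ∀ a b,
              (SimpleGraph.fromRel fun i j => ∃ k, e1 k = i ∧ e2 k = j).Reachable a b →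
                mhpad x a = mhpad x b := by
            intro a b hr
            obtain ⟨pth⟩ := hr
            induction pth with
            | nil => rfl
            | cons hadj _ ih => exact (hf _ _ hadj).trans ih
          funext i
          have h0 := hreach (Fin.castSucc i) (Fin.last n) (hconn.preconnected _ _)
          simpa [mhpad] using h0
        obtain ⟨k0, hk0⟩ := hδex
        have hSppos : (0:ℝ) < ∑ k, w k * Vbar (e1 k) * Vbar (e2 k) * Real.cos (etabar e1 e2 φbar k) * ((mhpad x (e1 k) - mhpad x (e2 k)) + Real.sin (etabar e1 e2 φbar k) / Real.cos (etabar e1 e2 φbar k) * ((Vbar (e1 k))⁻¹ * z (e1 k) + (Vbar (e2 k))⁻¹ * z (e2 k))) ^ 2 := by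
          refine Finset.sum_pos' (fun k _ => mul_nonneg
            (mul_pos (mul_pos (mul_pos (hw k) (hVbar (e1 k))) (hVbar (e2 k))) (hc k)).le
            (sq_nonneg _)) ⟨k0, Finset.mem_univ k0, ?_⟩
          have hsq : (0:ℝ) < (mhpad x (e1 k0) - mhpad x (e2 k0)
              + Real.sin (etabar e1 e2 φbar k0) / Real.cos (etabar e1 e2 φbar k0)
                * ((Vbar (e1 k0))⁻¹ * z (e1 k0) + (Vbar (e2 k0))⁻¹ * z (e2 k0))) ^ 2 := by
            have hval : mhpad x (e1 k0) - mhpad x (e2 k0)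
                + Real.sin (etabar e1 e2 φbar k0) / Real.cos (etabar e1 e2 φbar k0)
                  * ((Vbar (e1 k0))⁻¹ * z (e1 k0) + (Vbar (e2 k0))⁻¹ * z (e2 k0))
                = mhpad x (e1 k0) - mhpad x (e2 k0) := by
              rw [hz1, hz1]; ring
            rw [hval]
            exact lt_of_le_of_ne (sq_nonneg _) (Ne.symm (pow_ne_zero 2 hk0))
          exact mul_pos
            (mul_pos (mul_pos (mul_pos (hw k0) (hVbar (e1 k0))) (hVbar (e2 k0))) (hc k0)) hsq
        linarith
      · obtain ⟨i0, hi0⟩ := Function.ne_iff.mp ht0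
        have hti0 : t i0 ≠ 0 := by simpa using hi0
        have hStpos : (0:ℝ) < ∑ i, (kP i)⁻¹ * TP i * t i ^ 2 := by
          refine Finset.sum_pos' (fun i _ => mul_nonneg
            (mul_nonneg (inv_nonneg.2 (hkP i).le) (hTP i).le) (sq_nonneg _))
            ⟨i0, Finset.mem_univ i0, ?_⟩
          exact mul_pos (mul_pos (inv_pos.2 (hkP i0)) (hTP i0))
            (lt_of_le_of_ne (sq_nonneg _) (Ne.symm (pow_ne_zero 2 hti0)))
        linarith
    · obtain ⟨i0, hi0⟩ := Function.ne_iff.mp hz0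
      have hzi0 : z i0 ≠ 0 := by simpa using hi0
      have hSdpos : (0:ℝ) < ∑ i, dfun i * z i ^ 2 := by
        refine Finset.sum_pos' (fun i _ => mul_nonneg (hdpos i).le (sq_nonneg _))
          ⟨i0, Finset.mem_univ i0, ?_⟩
        exact mul_pos (hdpos i0) (lt_of_le_of_ne (sq_nonneg _) (Ne.symm (pow_ne_zero 2 hzi0)))
      linarith
end

section
/- Cut-set criterion for a negative direction (Lemma 4): let V̄ ∈ ℝⁿ_{>0}, φ̄ ∈ ℝ^{n−1}, h ∈ ℝⁿ, and set η̄ := D₁ᵀ φ̄. Define the symmetric (m+n)×(m+n) matrix M := [[Γ(V̄) [cos η̄], [sin η̄] Γ(V̄) |D|ᵀ [V̄]⁻¹], [[V̄]⁻¹ |D| Γ(V̄) [sin η̄], 𝒜(cos η̄) + diag(h)]], where 𝒜(cos η̄) is the symmetric n×n matrix with diagonal entries B_ii and off-diagonal entries −B_ij cos(η̄_{k(i,j)}) for {i,j} ∈ E (and 0 otherwise). Suppose there exists a cut-set K ⊆ E (i.e. removing the edges of K disconnects G) whose edges are pairwise non-incident (no two edges of K share an endpoint), such that for every edge k ∼ {i,j}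 in K one has sin²(η̄_k) > β_k cos(η̄_k), where β_k := 2·max{ (B_ii + h_i) V̄_i / (B_ij V̄_j), (B_jj + h_j) V̄_j / (B_ij V̄_i) }. Then M has a negative eigenvalue; equivalently there exists v ∈ ℝ^{m+n} with vᵀ M v < 0. -/
open Real Finset Matrix

namespace MicrogridCut

variable {n m : ℕ}

/-- Incidence matrix `D` of the oriented graph: column `k` has `+1` in row `e1 k`
and `−1` in row `e2 k`. -/
def Dmat (e1 e2 : Fin m → Fin (n + 1)) : Matrix (Fin (n + 1)) (Fin m) ℝ :=
  Matrix.of fun i k => if e1 k = i then 1 else if e2 k = i then -1 else 0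

/-- Entrywise absolute value `|D|` of the incidence matrix. -/
def absD (e1 e2 : Fin m → Fin (n + 1)) : Matrix (Fin (n + 1)) (Fin m) ℝ :=
  Matrix.of fun i k => if e1 k = i ∨ e2 k = i then 1 else 0

/-- `D₁`: the incidence matrix with its last row deleted. -/
def D1 (e1 e2 : Fin m → Fin (n + 1)) : Matrix (Fin n) (Fin m) ℝ :=
  Matrix.of fun i k => Dmat e1 e2 i.castSucc k

/-- `η̄ := D₁ᵀ φ̄`. -/
noncomputable def etabar (e1 e2 : Fin m → Fin (n + 1)) (φbar : Fin n → ℝ) : Fin m → ℝ :=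
  (D1 e1 e2)ᵀ *ᵥ φbar

/-- `Γ(V)`: diagonal with entries `B_ij V_i V_j` for edge `k ∼ {i,j}`. -/
def Γmat (e1 e2 : Fin m → Fin (n + 1)) (w : Fin m → ℝ) (V : Fin (n + 1) → ℝ) :
    Matrix (Fin m) (Fin m) ℝ :=
  Matrix.diagonal fun k => w k * V (e1 k) * V (e2 k)

/-- `B_ii = b̂_i + ∑_{edges k incident to i} w k`. -/
def Bii (e1 e2 : Fin m → Fin (n + 1)) (w : Fin m → ℝ) (bhat : Fin (n + 1) → ℝ)
    (i : Fin (n + 1)) : ℝ :=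
  bhat i + ∑ k, if e1 k = i ∨ e2 k = i then w k else 0

/-- `𝒜(cos η̄)`: diagonal entries `B_ii`, off-diagonal entries `−B_ij cos η̄_{k(i,j)}`
for `{i,j} ∈ E` and `0` otherwise. -/
noncomputable def Amat (e1 e2 : Fin m → Fin (n + 1)) (w : Fin m → ℝ)
    (bhat : Fin (n + 1) → ℝ) (η : Fin m → ℝ) :
    Matrix (Fin (n + 1)) (Fin (n + 1)) ℝ :=
  Matrix.of fun i j =>
    if i = j then Bii e1 e2 w bhat i
    else -∑ k, (if (e1 k = i ∧ e2 k = j) ∨ (e1 k = j ∧ e2 k = i)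
      then w k * Real.cos (η k) else 0)

/-- The symmetric `(m+n)×(m+n)` matrix `M` at the center of the Hessian product. -/
noncomputable def Mmat (e1 e2 : Fin m → Fin (n + 1)) (w : Fin m → ℝ)
    (bhat h : Fin (n + 1) → ℝ) (Vbar : Fin (n + 1) → ℝ) (φbar : Fin n → ℝ) :
    Matrix (Fin m ⊕ Fin (n + 1)) (Fin m ⊕ Fin (n + 1)) ℝ :=
  Matrix.fromBlocks
    (Γmat e1 e2 w Vbar * Matrix.diagonal fun k => Real.cos (etabar e1 e2 φbar k))
    (Matrix.diagonal (fun k => Real.sin (etabar e1 e2 φbar k)) * Γmat e1 e2 w Vbar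
      * (absD e1 e2)ᵀ * Matrix.diagonal fun i => (Vbar i)⁻¹)
    (Matrix.diagonal (fun i => (Vbar i)⁻¹) * absD e1 e2 * Γmat e1 e2 w Vbar
      * Matrix.diagonal fun k => Real.sin (etabar e1 e2 φbar k))
    (Amat e1 e2 w bhat (etabar e1 e2 φbar) + Matrix.diagonal h)

end MicrogridCut

open MicrogridCut


namespace MicrogridCut

/-- Test vector used to exhibit a negative direction: `x` on edge coordinate `k0`,
`c * Vi` at vertex `i`, `c * Vj` at vertex `j`, zero elsewhere. -/
noncomputable def testVec (k0 : Fin m) (i j : Fin (n + 1)) (Vi Vj x c : ℝ) :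
    Fin m ⊕ Fin (n + 1) → ℝ :=
  Sum.elim (fun k => if k = k0 then x else 0)
    (fun p => (if p = i then c * Vi else 0) + (if p = j then c * Vj else 0))

end MicrogridCut

set_option maxHeartbeats 2000000 in
/-- Cut-set criterion for a negative direction (Lemma 4): if there is a
cut-set `K` with pairwise non-incident edges on which `sin²(η̄_k) > β_k cos(η̄_k)`,
then `M` has a negative eigenvalue; equivalently there exists `v` with `vᵀ M v < 0`. -/
theorem cut_set_negative_direction
    (n m : ℕ)
    (e1 e2 : Fin m → Fin (n + 1)) (hloop : ∀ k, e1 k ≠ e2 k)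
    (hsimple : ∀ k k', k ≠ k' →
      ¬ ((e1 k = e1 k' ∧ e2 k = e2 k') ∨ (e1 k = e2 k' ∧ e2 k = e1 k')))
    (hconn : (SimpleGraph.fromRel fun i j => ∃ k, e1 k = i ∧ e2 k = j).Connected)
    (w : Fin m → ℝ) (hw : ∀ k, 0 < w k)
    (bhat : Fin (n + 1) → ℝ) (hbhat : ∀ i, 0 ≤ bhat i)
    (Vbar : Fin (n + 1) → ℝ) (hVbar : ∀ i, 0 < Vbar i)
    (φbar : Fin n → ℝ) (h : Fin (n + 1) → ℝ)
    (K : Finset (Fin m))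
    (hcut : ¬ (SimpleGraph.fromRel fun i j => ∃ k, k ∉ K ∧ e1 k = i ∧ e2 k = j).Connected)
    (hnonincident : ∀ k ∈ K, ∀ k' ∈ K, k ≠ k' →
      e1 k ≠ e1 k' ∧ e1 k ≠ e2 k' ∧ e2 k ≠ e1 k' ∧ e2 k ≠ e2 k')
    (hK : ∀ k ∈ K,
      Real.sin (etabar e1 e2 φbar k) ^ 2 >
        2 * max ((Bii e1 e2 w bhat (e1 k) + h (e1 k)) * Vbar (e1 k) / (w k * Vbar (e2 k)))
                ((Bii e1 e2 w bhat (e2 k) + h (e2 k)) * Vbar (e2 k) / (w k * Vbar (e1 k)))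
          * Real.cos (etabar e1 e2 φbar k)) :
    ∃ v : Fin m ⊕ Fin (n + 1) → ℝ,
      v ⬝ᵥ (Mmat e1 e2 w bhat h Vbar φbar *ᵥ v) < 0 := by
  classical
  -- `K` is nonempty, since removing no edges keeps the graph connected
  have hKne : K.Nonempty := by
    rcases K.eq_empty_or_nonempty with hE | hne
    · exfalso
      apply hcut
      have hrel : (fun i j => ∃ k, k ∉ K ∧ e1 k = i ∧ e2 k = j) =
          (fun i j => ∃ k, e1 k = i ∧ e2 k = j) := by
        subst hE; funext i j; simp
      rw [hrel]
      exact hconn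
    · exact hne
  obtain ⟨k0, hk0⟩ := hKne
  have hij : e1 k0 ≠ e2 k0 := hloop k0
  have hVi : 0 < Vbar (e1 k0) := hVbar _
  have hVj : 0 < Vbar (e2 k0) := hVbar _
  have hw0 : 0 < w k0 := hw k0
  -- the nine relevant entries of `M`
  have E11 : Mmat e1 e2 w bhat h Vbar φbar (Sum.inl k0) (Sum.inl k0)
      = w k0 * Vbar (e1 k0) * Vbar (e2 k0) * Real.cos (etabar e1 e2 φbar k0) := by
    simp [Mmat, Γmat]
  have E12i : Mmat e1 e2 w bhat h Vbar φbar (Sum.inl k0) (Sum.inr (e1 k0))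
      = Real.sin (etabar e1 e2 φbar k0) * (w k0 * Vbar (e2 k0)) := by
    simp [Mmat, Γmat, absD]
    field_simp
  have E12j : Mmat e1 e2 w bhat h Vbar φbar (Sum.inl k0) (Sum.inr (e2 k0))
      = Real.sin (etabar e1 e2 φbar k0) * (w k0 * Vbar (e1 k0)) := by
    simp [Mmat, Γmat, absD]
    field_simp
  have E21i : Mmat e1 e2 w bhat h Vbar φbar (Sum.inr (e1 k0)) (Sum.inl k0)
      = Real.sin (etabar e1 e2 φbar k0) * (w k0 * Vbar (e2 k0)) := by
    simp [Mmat, Γmat, absD]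
    field_simp
  have E21j : Mmat e1 e2 w bhat h Vbar φbar (Sum.inr (e2 k0)) (Sum.inl k0)
      = Real.sin (etabar e1 e2 φbar k0) * (w k0 * Vbar (e1 k0)) := by
    simp [Mmat, Γmat, absD]
    field_simp
  have E22ii : Mmat e1 e2 w bhat h Vbar φbar (Sum.inr (e1 k0)) (Sum.inr (e1 k0))
      = Bii e1 e2 w bhat (e1 k0) + h (e1 k0) := by
    simp [Mmat, Amat]
  have E22jj : Mmat e1 e2 w bhat h Vbar φbar (Sum.inr (e2 k0)) (Sum.inr (e2 k0))
      = Bii e1 e2 w bhat (e2 k0) + h (e2 k0) := by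
    simp [Mmat, Amat]
  have hsum1 : ∑ k, (if (e1 k = e1 k0 ∧ e2 k = e2 k0) ∨ (e1 k = e2 k0 ∧ e2 k = e1 k0)
      then w k * Real.cos (etabar e1 e2 φbar k) else 0)
      = w k0 * Real.cos (etabar e1 e2 φbar k0) := by
    rw [Finset.sum_eq_single k0]
    · simp
    · intro k _ hkk0
      exact if_neg (fun hc => hsimple k k0 hkk0 hc)
    · exact fun hx => absurd (Finset.mem_univ k0) hx
  have hsum2 : ∑ k, (if (e1 k = e2 k0 ∧ e2 k = e1 k0) ∨ (e1 k = e1 k0 ∧ e2 k = e2 k0)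
      then w k * Real.cos (etabar e1 e2 φbar k) else 0)
      = w k0 * Real.cos (etabar e1 e2 φbar k0) := by
    rw [Finset.sum_eq_single k0]
    · simp
    · intro k _ hkk0
      exact if_neg (fun hc => hsimple k k0 hkk0 hc.symm)
    · exact fun hx => absurd (Finset.mem_univ k0) hx
  have E22ij : Mmat e1 e2 w bhat h Vbar φbar (Sum.inr (e1 k0)) (Sum.inr (e2 k0))
      = -(w k0 * Real.cos (etabar e1 e2 φbar k0)) := by
    have : Mmat e1 e2 w bhat h Vbar φbar (Sum.inr (e1 k0)) (Sum.inr (e2 k0))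
        = (Amat e1 e2 w bhat (etabar e1 e2 φbar) + Matrix.diagonal h) (e1 k0) (e2 k0) := rfl
    rw [this, Matrix.add_apply, Matrix.diagonal_apply_ne _ hij]
    simp only [Amat, Matrix.of_apply, if_neg hij]
    rw [hsum1]
    ring
  have E22ji : Mmat e1 e2 w bhat h Vbar φbar (Sum.inr (e2 k0)) (Sum.inr (e1 k0))
      = -(w k0 * Real.cos (etabar e1 e2 φbar k0)) := by
    have : Mmat e1 e2 w bhat h Vbar φbar (Sum.inr (e2 k0)) (Sum.inr (e1 k0))
        = (Amat e1 e2 w bhat (etabar e1 e2 φbar) + Matrix.diagonal h) (e2 k0) (e1 k0) := rfl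
    rw [this, Matrix.add_apply, Matrix.diagonal_apply_ne _ hij.symm]
    simp only [Amat, Matrix.of_apply, if_neg hij.symm]
    rw [hsum2]
    ring
  -- value of the quadratic form on the test vector
  have hQ : ∀ x c : ℝ,
      testVec k0 (e1 k0) (e2 k0) (Vbar (e1 k0)) (Vbar (e2 k0)) x c ⬝ᵥ
        (Mmat e1 e2 w bhat h Vbar φbar *ᵥ
          testVec k0 (e1 k0) (e2 k0) (Vbar (e1 k0)) (Vbar (e2 k0)) x c)
      = (w k0 * Vbar (e1 k0) * Vbar (e2 k0)) * Real.cos (etabar e1 e2 φbar k0) * x ^ 2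
        + 4 * c * (w k0 * Vbar (e1 k0) * Vbar (e2 k0)) * Real.sin (etabar e1 e2 φbar k0) * x
        + c ^ 2 * ((Bii e1 e2 w bhat (e1 k0) + h (e1 k0)) * Vbar (e1 k0) ^ 2
            + (Bii e1 e2 w bhat (e2 k0) + h (e2 k0)) * Vbar (e2 k0) ^ 2
            - 2 * (w k0 * Vbar (e1 k0) * Vbar (e2 k0)) * Real.cos (etabar e1 e2 φbar k0)) := by
    intro x c
    simp only [dotProduct, Matrix.mulVec, testVec, Sum.elim_inl, Sum.elim_inr,
      Fintype.sum_sum_type, ite_mul, mul_ite, zero_mul, mul_zero, add_mul, mul_add,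
      Finset.sum_add_distrib, Finset.sum_ite_eq', Finset.mem_univ, if_true]
    rw [E11, E12i, E12j, E21i, E21j, E22ii, E22jj, E22ij, E22ji]
    ring
  have hKs := hK k0 hk0
  set mx := max ((Bii e1 e2 w bhat (e1 k0) + h (e1 k0)) * Vbar (e1 k0) / (w k0 * Vbar (e2 k0)))
      ((Bii e1 e2 w bhat (e2 k0) + h (e2 k0)) * Vbar (e2 k0) / (w k0 * Vbar (e1 k0))) with hmx
  have h1 : (Bii e1 e2 w bhat (e1 k0) + h (e1 k0)) * Vbar (e1 k0) ^ 2
      ≤ mx * (w k0 * Vbar (e1 k0) * Vbar (e2 k0)) := by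
    have hle : (Bii e1 e2 w bhat (e1 k0) + h (e1 k0)) * Vbar (e1 k0) / (w k0 * Vbar (e2 k0)) ≤ mx :=
      le_of_le_of_eq (le_max_left _ _) hmx.symm
    have e : (Bii e1 e2 w bhat (e1 k0) + h (e1 k0)) * Vbar (e1 k0) ^ 2
        = ((Bii e1 e2 w bhat (e1 k0) + h (e1 k0)) * Vbar (e1 k0) / (w k0 * Vbar (e2 k0)))
          * (w k0 * Vbar (e1 k0) * Vbar (e2 k0)) := by
      field_simp
    rw [e]
    exact mul_le_mul_of_nonneg_right hle (le_of_lt (mul_pos (mul_pos hw0 hVi) hVj))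
  have h2 : (Bii e1 e2 w bhat (e2 k0) + h (e2 k0)) * Vbar (e2 k0) ^ 2
      ≤ mx * (w k0 * Vbar (e1 k0) * Vbar (e2 k0)) := by
    have hle : (Bii e1 e2 w bhat (e2 k0) + h (e2 k0)) * Vbar (e2 k0) / (w k0 * Vbar (e1 k0)) ≤ mx :=
      le_of_le_of_eq (le_max_right _ _) hmx.symm
    have e : (Bii e1 e2 w bhat (e2 k0) + h (e2 k0)) * Vbar (e2 k0) ^ 2
        = ((Bii e1 e2 w bhat (e2 k0) + h (e2 k0)) * Vbar (e2 k0) / (w k0 * Vbar (e1 k0)))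
          * (w k0 * Vbar (e1 k0) * Vbar (e2 k0)) := by
      field_simp
    rw [e]
    exact mul_le_mul_of_nonneg_right hle (le_of_lt (mul_pos (mul_pos hw0 hVi) hVj))
  have hGpos : 0 < w k0 * Vbar (e1 k0) * Vbar (e2 k0) := mul_pos (mul_pos hw0 hVi) hVj
  rcases lt_trichotomy (Real.cos (etabar e1 e2 φbar k0)) 0 with hneg | hzero | hpos
  · -- cos < 0 : take x = 1, c = 0
    refine ⟨testVec k0 (e1 k0) (e2 k0) (Vbar (e1 k0)) (Vbar (e2 k0)) 1 0, ?_⟩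
    rw [hQ 1 0]
    nlinarith [mul_neg_of_pos_of_neg hGpos hneg]
  · -- cos = 0 : take c = 1 and x large against sin
    have hs2 : 0 < Real.sin (etabar e1 e2 φbar k0) ^ 2 := by
      rw [hzero, mul_zero] at hKs
      exact hKs
    have hsne : Real.sin (etabar e1 e2 φbar k0) ≠ 0 := by
      intro h0
      rw [h0] at hs2
      simp at hs2
    set P := (Bii e1 e2 w bhat (e1 k0) + h (e1 k0)) * Vbar (e1 k0) ^ 2
        + (Bii e1 e2 w bhat (e2 k0) + h (e2 k0)) * Vbar (e2 k0) ^ 2 with hP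
    set x0 := -(|P| + 1) /
        (4 * (w k0 * Vbar (e1 k0) * Vbar (e2 k0)) * Real.sin (etabar e1 e2 φbar k0)) with hx0
    refine ⟨testVec k0 (e1 k0) (e2 k0) (Vbar (e1 k0)) (Vbar (e2 k0)) x0 1, ?_⟩
    rw [hQ x0 1, hzero]
    have hx : 4 * 1 * (w k0 * Vbar (e1 k0) * Vbar (e2 k0))
        * Real.sin (etabar e1 e2 φbar k0) * x0 = -(|P| + 1) := by
      rw [hx0]
      field_simp
    nlinarith [hx, le_abs_self P]
  · -- cos > 0 : take c = 1, x = -2 sin / cos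
    set s := Real.sin (etabar e1 e2 φbar k0) with hsdef
    set co := Real.cos (etabar e1 e2 φbar k0) with hcodef
    set x0 := -2 * s / co with hx0
    refine ⟨testVec k0 (e1 k0) (e2 k0) (Vbar (e1 k0)) (Vbar (e2 k0)) x0 1, ?_⟩
    rw [hQ x0 1]
    set G := w k0 * Vbar (e1 k0) * Vbar (e2 k0) with hGdef
    set P := (Bii e1 e2 w bhat (e1 k0) + h (e1 k0)) * Vbar (e1 k0) ^ 2
        + (Bii e1 e2 w bhat (e2 k0) + h (e2 k0)) * Vbar (e2 k0) ^ 2 with hP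
    have hT : co * (G * co * x0 ^ 2 + 4 * 1 * G * s * x0 + 1 ^ 2 * (P - 2 * G * co))
        = -4 * G * s ^ 2 + co * P - 2 * G * co ^ 2 := by
      rw [hx0]
      field_simp
      ring
    have hPle : P ≤ 2 * mx * G := by
      rw [hP, hGdef]
      nlinarith [h1, h2]
    have hlt : co * (G * co * x0 ^ 2 + 4 * 1 * G * s * x0 + 1 ^ 2 * (P - 2 * G * co)) < 0 := by
      rw [hT]
      nlinarith [mul_le_mul_of_nonneg_left hPle hpos.le,
        mul_lt_mul_of_pos_left hKs hGpos, mul_pos hGpos (mul_pos hpos hpos), sq_nonneg s]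
    nlinarith [hlt, hpos]
end

section
/- Optimal active power injection: let K_P = diag(k_P) be diagonal positive definite and P* ∈ ℝⁿ, and set ū_P := −(1ᵀP* / (1ᵀ K_P⁻¹ 1))·1. Then: (i) every u ∈ ℝⁿ for which there exist θ ∈ ℝⁿ and V ∈ ℝⁿ_{>0} with 0 = −K_P(P(θ,V) − P*) + u satisfies the linear constraint 1ᵀ K_P⁻¹ u = −1ᵀ P*; (ii) ū_P satisfies this constraint and is the unique minimizer of the cost C(u) := (1/2) uᵀ K_P⁻¹ u over the set of all u ∈ ℝⁿ satisfying 1ᵀ K_P⁻¹ u = −1ᵀ P*. -/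
open Real Finset Matrix

lemma antisym_sum_zero {n : ℕ} (f : Fin n → Fin n → ℝ)
    (hf : ∀ i j, f j i = -f i j) :
    ∑ i, ∑ j ∈ Finset.univ.erase i, f i j = 0 := by
  have h : ∑ i, ∑ j ∈ Finset.univ.erase i, f i j
      = ∑ j, ∑ i ∈ Finset.univ.erase j, f i j := by
    apply Finset.sum_comm'
    intro x y
    simp [and_comm, eq_comm, ne_comm]
  have h2 : ∑ j, ∑ i ∈ Finset.univ.erase j, f i j
      = -∑ i, ∑ j ∈ Finset.univ.erase i, f i j := by
    rw [← Finset.sum_neg_distrib]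
    apply Finset.sum_congr rfl
    intro i _
    rw [← Finset.sum_neg_distrib]
    apply Finset.sum_congr rfl
    intro j _
    rw [hf]
  linarith [h, h2]

/-- Optimal active power injection: with
`ū_P := −(1ᵀP*/(1ᵀK_P⁻¹1))·1`, (i) every `u` compatible with some steady state
satisfies `1ᵀK_P⁻¹u = −1ᵀP*`, and (ii) `ū_P` satisfies this constraint and is the
unique minimizer of `C(u) = (1/2)uᵀK_P⁻¹u` over it. -/
theorem optimal_active_power_injection
    (n : ℕ) (G : SimpleGraph (Fin n)) [DecidableRel G.Adj]
    (hconn : G.Connected)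
    (B : Fin n → Fin n → ℝ)
    (hBsymm : ∀ i j, B i j = B j i)
    (hBpos : ∀ i j, G.Adj i j → 0 < B i j)
    (hBzero : ∀ i j, ¬ G.Adj i j → B i j = 0)
    (kP Pstar : Fin n → ℝ) (hkP : ∀ i, 0 < kP i)
    (uPbar : Fin n → ℝ)
    (huPbar : uPbar = fun _ => -((∑ i, Pstar i) / ∑ i, (kP i)⁻¹)) :
    (∀ u : Fin n → ℝ,
      (∃ θ V : Fin n → ℝ, (∀ i, 0 < V i) ∧
        ∀ i, 0 = -(kP i * (activeP n B θ V i - Pstar i)) + u i) →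
      ∑ i, (kP i)⁻¹ * u i = -∑ i, Pstar i) ∧
    (∑ i, (kP i)⁻¹ * uPbar i = -∑ i, Pstar i) ∧
    (∀ u : Fin n → ℝ, ∑ i, (kP i)⁻¹ * u i = -∑ i, Pstar i → u ≠ uPbar →
      (1 / 2) * ∑ i, (kP i)⁻¹ * uPbar i ^ 2 < (1 / 2) * ∑ i, (kP i)⁻¹ * u i ^ 2) := by
  have hne : Nonempty (Fin n) := hconn.nonempty
  have hSk : 0 < ∑ i, (kP i)⁻¹ :=
    Finset.sum_pos (fun i _ => inv_pos.mpr (hkP i)) Finset.univ_nonempty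
  set Sk := ∑ i, (kP i)⁻¹ with hSkdef
  set SP := ∑ i, Pstar i with hSPdef
  set c : ℝ := -(SP / Sk) with hc
  have huc : ∀ i, uPbar i = c := by intro i; rw [huPbar]
  have hcSk : Sk * c = -SP := by
    rw [hc]; field_simp
  refine ⟨?_, ?_, ?_⟩
  · rintro u ⟨θ, V, hV, heq⟩
    have hP0 : ∑ i, activeP n B θ V i = 0 := by
      apply antisym_sum_zero
      intro i j
      rw [hBsymm j i, Real.sin_sub, Real.sin_sub]
      ring
    have : ∀ i, (kP i)⁻¹ * u i = activeP n B θ V i - Pstar i := by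
      intro i
      have h := heq i
      have hk := (hkP i).ne'
      field_simp
      nlinarith [heq i]
    rw [Finset.sum_congr rfl (fun i _ => this i), Finset.sum_sub_distrib, hP0]
    simp [hSPdef]
  · have : ∑ i, (kP i)⁻¹ * uPbar i = Sk * c := by
      rw [Finset.sum_mul]
      exact Finset.sum_congr rfl (fun i _ => by rw [huc i])
    rw [this, hcSk]
  · intro u hu hne2
    have key : ∑ i, (kP i)⁻¹ * (u i - c) ^ 2
        = ∑ i, (kP i)⁻¹ * u i ^ 2 - ∑ i, (kP i)⁻¹ * uPbar i ^ 2 := by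
      have expand : ∀ i, (kP i)⁻¹ * (u i - c) ^ 2
          = (kP i)⁻¹ * u i ^ 2 - 2 * c * ((kP i)⁻¹ * u i) + c ^ 2 * (kP i)⁻¹ := by
        intro i; ring
      rw [Finset.sum_congr rfl (fun i _ => expand i)]
      rw [Finset.sum_add_distrib, Finset.sum_sub_distrib, ← Finset.mul_sum,
        ← Finset.mul_sum, hu]
      have : ∑ i, (kP i)⁻¹ * uPbar i ^ 2 = c ^ 2 * Sk := by
        rw [hSkdef, Finset.mul_sum]
        exact Finset.sum_congr rfl (fun i _ => by rw [huc i]; ring)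
      rw [this, ← hSkdef]
      clear_value Sk SP c
      linear_combination (2*c) * hcSk
    have hpos : 0 < ∑ i, (kP i)⁻¹ * (u i - c) ^ 2 := by
      obtain ⟨i0, hi0⟩ : ∃ i, u i ≠ c := by
        by_contra h
        push_neg at h
        exact hne2 (funext fun i => by rw [h i, huc i])
      apply Finset.sum_pos' (fun i _ => mul_nonneg (inv_pos.mpr (hkP i)).le (sq_nonneg _))
      refine ⟨i0, Finset.mem_univ i0, ?_⟩
      have hz : u i0 - c ≠ 0 := sub_ne_zero.mpr hi0
      exact mul_pos (inv_pos.mpr (hkP i0)) (by positivity)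
    linarith [key, hpos]
end

section
/- Steady-state characterization of the distributed active power controller: let L ∈ ℝ^{n×n} be symmetric positive semidefinite with kernel equal to the span of the all-ones vector 1 (the Laplacian of a connected undirected graph), let K_P = diag(k_P) be diagonal positive definite, and let P*, P, ξ ∈ ℝⁿ with 1ᵀP = 0. If L ξ = 0 and ξ = K_P (P − P*), then ξ = −(1ᵀP* / (1ᵀ K_P⁻¹ 1))·1 and P = P* − K_P⁻¹ 1 · (1ᵀP* / (1ᵀ K_P⁻¹ 1)). -/
open Real Finset Matrix

/-- Steady-state characterization of the distributed active power
controller: if `L` is a symmetric positive semidefinite matrix whose kernel is the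
span of the all-ones vector, `1ᵀP = 0`, `Lξ = 0` and `ξ = K_P(P − P*)`, then
`ξ = −(1ᵀP*/(1ᵀK_P⁻¹1))·1` and `P = P* − K_P⁻¹1·(1ᵀP*/(1ᵀK_P⁻¹1))`. -/
theorem distributed_controller_steady_state
    (n : ℕ) (L : Matrix (Fin n) (Fin n) ℝ)
    (hL : L.PosSemidef)
    (hker : ∀ x : Fin n → ℝ, L *ᵥ x = 0 ↔ ∃ c : ℝ, x = fun _ => c)
    (kP : Fin n → ℝ) (hkP : ∀ i, 0 < kP i)
    (Pstar P ξ : Fin n → ℝ)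
    (hP : ∑ i, P i = 0)
    (hLξ : L *ᵥ ξ = 0)
    (hξ : ∀ i, ξ i = kP i * (P i - Pstar i)) :
    (∀ i, ξ i = -((∑ j, Pstar j) / ∑ j, (kP j)⁻¹)) ∧
    (∀ i, P i = Pstar i - (kP i)⁻¹ * ((∑ j, Pstar j) / ∑ j, (kP j)⁻¹)) := by
  obtain ⟨c, hc⟩ := (hker ξ).mp hLξ
  rcases Nat.eq_zero_or_pos n with hn | hn
  · constructor <;> intro i <;> exact absurd i.2 (by omega)
  · have hK : (0:ℝ) < ∑ j, (kP j)⁻¹ :=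
      Finset.sum_pos (fun j _ => inv_pos.mpr (hkP j)) (by simp [Finset.univ_nonempty_iff, Fin.pos_iff_nonempty.mp hn])
    have hPi : ∀ i, P i = Pstar i + c * (kP i)⁻¹ := by
      intro i
      have h : c = kP i * (P i - Pstar i) := by rw [← hξ i, hc]
      have h2 : P i - Pstar i = c * (kP i)⁻¹ := by
        rw [← div_eq_mul_inv, eq_div_iff (hkP i).ne', h]; ring
      linarith
    have hsum : 0 = ∑ j, Pstar j + c * ∑ j, (kP j)⁻¹ := by
      rw [← hP]
      simp [hPi, Finset.sum_add_distrib, Finset.mul_sum]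
    have hcval : c = -((∑ j, Pstar j) / ∑ j, (kP j)⁻¹) := by
      rw [← neg_div, eq_div_iff hK.ne']
      linarith
    constructor
    · intro i; rw [hc, ← hcval]
    · intro i; rw [hPi i, hcval]; ring
end

section
/- Proportional reactive power sharing for the E-ARP controller: let L ∈ ℝ^{n×n} be symmetric positive semidefinite with kernel equal to the span of the all-ones vector 1 (the Laplacian of a connected undirected communication graph), K_Q = diag(k_Q) diagonal positive definite, θ ∈ ℝⁿ, V ∈ ℝⁿ_{>0}, and suppose at least one shunt value b̂_i is strictly positive (so that 𝒜(θ) is positive definite). If L K_Q Q(θ,V) = 0, then K_Q Q(θ,V) = α·1 with α = 1ᵀQ(θ,V) / (1ᵀ K_Q⁻¹ 1) > 0; in particular (k_Q)_i Q_i(θ,V) = (k_Q)_j Q_j(θ,V) for all i, j. -/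
open Real Finset Matrix

/-- Proportional reactive power sharing for the E-ARP controller:
if `L K_Q Q(θ,V) = 0` with `L` a Laplacian of a connected communication graph, then
`K_Q Q(θ,V) = α·1` with `α = 1ᵀQ/(1ᵀK_Q⁻¹1) > 0`; in particular
`(k_Q)_i Q_i = (k_Q)_j Q_j` for all `i, j`. -/
theorem earp_reactive_power_sharing
    (n : ℕ) (G : SimpleGraph (Fin n)) [DecidableRel G.Adj]
    (hconn : G.Connected)
    (B : Fin n → Fin n → ℝ)
    (hBsymm : ∀ i j, B i j = B j i)
    (hBpos : ∀ i j, G.Adj i j → 0 < B i j)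
    (hBzero : ∀ i j, ¬ G.Adj i j → B i j = 0)
    (bhat : Fin n → ℝ) (hbhat : ∀ i, 0 ≤ bhat i)
    (hone : ∃ i, 0 < bhat i)
    (L : Matrix (Fin n) (Fin n) ℝ)
    (hL : L.PosSemidef)
    (hker : ∀ x : Fin n → ℝ, L *ᵥ x = 0 ↔ ∃ c : ℝ, x = fun _ => c)
    (kQ : Fin n → ℝ) (hkQ : ∀ i, 0 < kQ i)
    (θ V : Fin n → ℝ) (hV : ∀ i, 0 < V i)
    (hLQ : (L *ᵥ fun i => kQ i * reactiveQ n B bhat θ V i) = 0) :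
    (∀ i, kQ i * reactiveQ n B bhat θ V i
        = (∑ j, reactiveQ n B bhat θ V j) / ∑ j, (kQ j)⁻¹) ∧
    (0 < (∑ j, reactiveQ n B bhat θ V j) / ∑ j, (kQ j)⁻¹) ∧
    (∀ i j, kQ i * reactiveQ n B bhat θ V i = kQ j * reactiveQ n B bhat θ V j) := by
  obtain ⟨i₀, hi₀⟩ := hone
  haveI : Nonempty (Fin n) := ⟨i₀⟩
  set Q := reactiveQ n B bhat θ V with hQdef
  obtain ⟨c, hc⟩ := (hker _).mp hLQ
  have hc' : ∀ i, kQ i * Q i = c := fun i => congrFun hc i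
  have hBnn : ∀ i j, 0 ≤ B i j := by
    intro i j
    by_cases h : G.Adj i j
    · exact (hBpos i j h).le
    · exact (hBzero i j h).ge
  have hBii : ∀ i, B i i = 0 := fun i => hBzero i i (G.irrefl)
  set f : Fin n → Fin n → ℝ :=
    fun i j => B i j * V i ^ 2 - B i j * V i * V j * Real.cos (θ i - θ j) with hf
  have hQi : ∀ i, Q i = bhat i * V i ^ 2 + ∑ j, f i j := by
    intro i
    have h0 : f i i = 0 := by simp [hf, hBii i]
    rw [hQdef]
    simp only [reactiveQ, Bdiag, hf]
    rw [← Finset.sum_erase Finset.univ h0, Finset.sum_sub_distrib, add_mul,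
      Finset.sum_mul]
    ring
  have hS : 0 ≤ ∑ i, ∑ j, f i j := by
    have hswap : (∑ i, ∑ j, f i j) = ∑ i, ∑ j, f j i := Finset.sum_comm
    have h2 : (∑ i, ∑ j, f i j) + (∑ i, ∑ j, f i j)
        = ∑ i, ∑ j, (f i j + f j i) := by
      rw [hswap]
      nth_rewrite 1 [← hswap]
      rw [← Finset.sum_add_distrib]
      congr 1; ext i
      rw [← Finset.sum_add_distrib]
    have hterm : ∀ i j : Fin n, 0 ≤ f i j + f j i := by
      intro i j
      have hcs : Real.cos (θ j - θ i) = Real.cos (θ i - θ j) := by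
        rw [← Real.cos_neg]; ring_nf
      have h1 : f i j + f j i = B i j * ((V i - V j) ^ 2
          + 2 * V i * V j * (1 - Real.cos (θ i - θ j))) := by
        simp only [hf, hcs, hBsymm j i]
        ring
      rw [h1]
      apply mul_nonneg (hBnn i j)
      have hc1 := mul_nonneg (mul_pos (hV i) (hV j)).le
        (sub_nonneg.mpr (Real.cos_le_one (θ i - θ j)))
      nlinarith [sq_nonneg (V i - V j)]
    nlinarith [Finset.sum_nonneg (fun i (_ : i ∈ Finset.univ) =>
      Finset.sum_nonneg (fun j (_ : j ∈ Finset.univ) => hterm i j))]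
  have hsumQ : 0 < ∑ j, Q j := by
    have h1 : (∑ j, Q j) = (∑ j, bhat j * V j ^ 2) + ∑ i, ∑ j, f i j := by
      simp_rw [hQi]; rw [Finset.sum_add_distrib]
    have hb : 0 < ∑ j, bhat j * V j ^ 2 := by
      have h2 : bhat i₀ * V i₀ ^ 2 ≤ ∑ j, bhat j * V j ^ 2 :=
        Finset.single_le_sum (fun j _ => mul_nonneg (hbhat j) (sq_nonneg _))
          (Finset.mem_univ i₀)
      have : 0 < bhat i₀ * V i₀ ^ 2 :=
        mul_pos hi₀ (pow_pos (hV i₀) 2)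
      linarith
    linarith [h1, hb, hS]
  have hinv : 0 < ∑ j, (kQ j)⁻¹ :=
    Finset.sum_pos (fun j _ => inv_pos.mpr (hkQ j)) Finset.univ_nonempty
  have hQc : ∀ i, Q i = c * (kQ i)⁻¹ := by
    intro i
    rw [← hc' i, mul_comm (kQ i), mul_inv_cancel_right₀ (hkQ i).ne']
  have hsum2 : (∑ j, Q j) = c * ∑ j, (kQ j)⁻¹ := by
    simp_rw [hQc]; rw [Finset.mul_sum]
  have hceq : c = (∑ j, Q j) / ∑ j, (kQ j)⁻¹ := by
    rw [hsum2, mul_div_assoc, div_self hinv.ne', mul_one]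
  refine ⟨fun i => by rw [hc' i, hceq], ?_, fun i j => by rw [hc' i, hc' j]⟩
  exact div_pos hsumQ hinv
end

section
/- Conserved quantity of the E-ARP voltage dynamics: let K_Q = diag(k_Q) be diagonal positive definite and L ∈ ℝ^{n×n} satisfy 1ᵀ L = 0 (e.g. a Laplacian matrix). Suppose V : ℝ → ℝⁿ is differentiable with V_i(t) > 0 for all t and all i, and there exists q : ℝ → ℝⁿ such that V′(t) = −[V(t)] K_Q L K_Q q(t) for all t. Then the function t ↦ Σ_i (k_Q)_i⁻¹ ln V_i(t) is constant. -/
open Real Finset Matrix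

/-- Conserved quantity of the E-ARP voltage dynamics: if `1ᵀL = 0`,
`V` is differentiable, positive, and `V′ = −[V] K_Q L K_Q q(t)`, then
`t ↦ ∑ i (k_Q)_i⁻¹ ln V_i(t)` is constant. -/
theorem earp_conserved_quantity
    (n : ℕ) (kQ : Fin n → ℝ) (hkQ : ∀ i, 0 < kQ i)
    (L : Matrix (Fin n) (Fin n) ℝ) (hL : ∀ j, ∑ i, L i j = 0)
    (V : ℝ → Fin n → ℝ) (q : ℝ → Fin n → ℝ)
    (hdiff : ∀ i, Differentiable ℝ fun t => V t i)
    (hpos : ∀ t i, 0 < V t i)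
    (hode : ∀ t i, deriv (fun s => V s i) t
      = -(V t i * (kQ i * (L *ᵥ fun j => kQ j * q t j) i))) :
    ∀ t s : ℝ, ∑ i, (kQ i)⁻¹ * Real.log (V t i) = ∑ i, (kQ i)⁻¹ * Real.log (V s i) := by
  have key : ∀ t, HasDerivAt (fun u => ∑ i, (kQ i)⁻¹ * Real.log (V u i)) 0 t := by
    intro t
    have h1 : ∀ i : Fin n, HasDerivAt (fun u => (kQ i)⁻¹ * Real.log (V u i))
        ((kQ i)⁻¹ * (deriv (fun s => V s i) t / V t i)) t := by
      intro i
      exact (((hdiff i t).hasDerivAt).log (hpos t i).ne').const_mul _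
    have h2 : HasDerivAt (fun u => ∑ i, (kQ i)⁻¹ * Real.log (V u i))
        (∑ i, (kQ i)⁻¹ * (deriv (fun s => V s i) t / V t i)) t :=
      HasDerivAt.fun_sum (fun i _ => h1 i)
    have hzero : ∑ i ∈ Finset.univ,
        (kQ i)⁻¹ * (deriv (fun s => V s i) t / V t i) = 0 := by
      have : ∀ i : Fin n, (kQ i)⁻¹ * (deriv (fun s => V s i) t / V t i)
          = -((L *ᵥ fun j => kQ j * q t j) i) := by
        intro i
        rw [hode t i]
        field_simp [(hpos t i).ne', (hkQ i).ne']
      rw [Finset.sum_congr rfl fun i _ => this i]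
      simp only [Matrix.mulVec, dotProduct]
      rw [Finset.sum_neg_distrib, neg_eq_zero, Finset.sum_comm]
      simp only [← Finset.sum_mul]
      have h3 : ∀ j : Fin n, (∑ i, L i j) * (kQ j * q t j) = 0 := by
        intro j; rw [hL j, zero_mul]
      simp [h3]
    rwa [hzero] at h2
  intro t s
  exact is_const_of_deriv_eq_zero (fun u => (key u).differentiableAt)
    (fun u => (key u).deriv) t s
end
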